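/- arXiv:1606.02125 — 4 statements merged into one kernel-verified Lean document; each statement's English description precedes it below -/
import Mathlib

section
/- Let f be an entire function on ℂ and ψ a non-negative, even, locally integrable function on ℝ such that for some positive constants a and C one has |f(z)| ≤ C e^{a|z|} for all z ∈ ℂ and |f(x)| ≤ C e^{−ψ(x)} for all x ∈ ℝ. If ∫_ℝ ψ(r)/(1+r²) dr = ∞, then f is identically zero on ℂ. -/
open MeasureTheory

open Filter Topology Set Complex

set_option maxHeartbeats 1000000

noncomputable section EntireAux

namespace EntireAux

/-- The open upper half plane. -/
def H : Set ℂ := {z : ℂ | 0 < z.im}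

lemma isOpen_H : IsOpen H := isOpen_lt continuous_const Complex.continuous_im

lemma closure_H : closure H ⊆ {z : ℂ | 0 ≤ z.im} := by
  rw [show H = {z : ℂ | 0 < z.im} from rfl, closure_setOf_lt_im]

/-- Maximum principle with `limsup`-style boundary bounds on a bounded open
preconnected set. -/
lemma maxp {U : Set ℂ} (hU : IsOpen U) (hbU : Bornology.IsBounded U)
    (hpc : IsPreconnected U) {g : ℂ → ℂ} (hg : DifferentiableOn ℂ g U) {c : ℝ}
    (hbd : ∀ p ∈ frontier U, ∀ ε > 0, ∀ᶠ z in 𝓝[U] p, ‖g z‖ ≤ c + ε) :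
    ∀ z ∈ U, ‖g z‖ ≤ c := by
  have key : ∀ ε > 0, ∀ z ∈ U, ‖g z‖ < c + ε := by
    intro ε hε
    by_contra hcon
    push_neg at hcon
    obtain ⟨z₁, hz₁U, hz₁⟩ := hcon
    set S := {z ∈ U | c + ε ≤ ‖g z‖} with hSdef
    have hSU : S ⊆ U := fun z hz => hz.1
    have hgc : ContinuousOn g U := hg.continuousOn
    have hSc : closure S ⊆ S := by
      intro p hp
      have hpU : p ∈ closure U := closure_mono hSU hp
      have hne : (𝓝[S] p).NeBot := mem_closure_iff_nhdsWithin_neBot.mp hp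
      have hev : ∀ᶠ z in 𝓝[S] p, c + ε ≤ ‖g z‖ :=
        eventually_nhdsWithin_of_forall (fun z hz => hz.2)
      by_cases hpU' : p ∈ U
      · refine ⟨hpU', ?_⟩
        have hc : ContinuousAt g p := (hgc p hpU').continuousAt (hU.mem_nhds hpU')
        have ht : Filter.Tendsto (fun z => ‖g z‖) (𝓝[S] p) (𝓝 ‖g p‖) :=
          hc.norm.tendsto.mono_left nhdsWithin_le_nhds
        exact ge_of_tendsto ht hev
      · have hpf : p ∈ frontier U := by
          rw [frontier_eq_closure_inter_closure]
          exact ⟨hpU, subset_closure (by simpa using hpU')⟩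
        have h1 := hbd p hpf (ε / 2) (by positivity)
        have h2 : ∀ᶠ z in 𝓝[S] p, ‖g z‖ ≤ c + ε / 2 :=
          h1.filter_mono (nhdsWithin_mono _ hSU)
        obtain ⟨z, hza, hzb⟩ := (h2.and hev).exists
        linarith
    have hSclosed : IsClosed S := isClosed_of_closure_subset hSc
    have hScomp : IsCompact S :=
      Metric.isCompact_of_isClosed_isBounded hSclosed (hbU.subset hSU)
    have hSne : S.Nonempty := ⟨z₁, hz₁U, hz₁⟩
    obtain ⟨z₀, hz₀S, hz₀max⟩ := hScomp.exists_isMaxOn hSne ((hgc.mono hSU).norm)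
    have hmaxU : IsMaxOn (norm ∘ g) U z₀ := by
      intro z hzU
      by_cases hzS : z ∈ S
      · exact hz₀max hzS
      · have hlt : ‖g z‖ < c + ε := by
          by_contra h; push_neg at h; exact hzS ⟨hzU, h⟩
        calc ‖g z‖ ≤ c + ε := hlt.le
          _ ≤ ‖g z₀‖ := hz₀S.2
    have heq := Complex.norm_eqOn_of_isPreconnected_of_isMaxOn hpc hU hg hz₀S.1 hmaxU
    have hfr : (frontier U).Nonempty := by
      by_contra h
      rw [Set.not_nonempty_iff_eq_empty] at h
      rcases isClopen_iff.mp (isClopen_iff_frontier_eq_empty.mpr h) with h' | h'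
      · exact (h' ▸ hz₁U : z₁ ∈ (∅ : Set ℂ))
      · obtain ⟨r, hr⟩ := hbU.subset_closedBall 0
        have hx : ((|r| + 1 : ℝ) : ℂ) ∈ U := h' ▸ mem_univ _
        have h4 := hr hx
        rw [Metric.mem_closedBall, dist_zero_right, Complex.norm_real, Real.norm_eq_abs] at h4
        have h5 : |(|r| + 1)| = |r| + 1 := abs_of_nonneg (by positivity)
        rw [h5] at h4
        linarith [le_abs_self r]
    obtain ⟨p, hpf⟩ := hfr
    have h1 := hbd p hpf (ε / 2) (by positivity)
    have hne : (𝓝[U] p).NeBot :=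
      mem_closure_iff_nhdsWithin_neBot.mp (frontier_subset_closure hpf)
    have h2 : ∀ᶠ z in 𝓝[U] p, c + ε ≤ ‖g z‖ :=
      eventually_nhdsWithin_of_forall (fun z hz => by
        have h3 : ‖g z‖ = ‖g z₀‖ := heq hz
        rw [h3]; exact le_trans hz₀S.2 le_rfl)
    obtain ⟨z, hza, hzb⟩ := (h1.and h2).exists
    linarith
  intro z hz
  by_contra hlt
  push_neg at hlt
  have := key ((‖g z‖ - c) / 2) (by linarith) z hz
  linarith

lemma norm_add_I_ge_one {z : ℂ} (hz : 0 ≤ z.im) : 1 ≤ ‖z + Complex.I‖ := by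
  have h1 : (z + Complex.I).im = z.im + 1 := by simp
  have h2 : |(z + Complex.I).im| ≤ ‖z + Complex.I‖ := Complex.abs_im_le_norm _
  rw [h1, _root_.abs_of_nonneg (by linarith : (0:ℝ) ≤ z.im + 1)] at h2
  linarith

lemma norm_le_norm_add_I {z : ℂ} (hz : 0 ≤ z.im) : ‖z‖ ≤ ‖z + Complex.I‖ := by
  have h1 : ‖z‖ ^ 2 = z.re ^ 2 + z.im ^ 2 := by
    rw [Complex.sq_norm, Complex.normSq_apply]; ring
  have h2 : ‖z + Complex.I‖ ^ 2 = z.re ^ 2 + (z.im + 1) ^ 2 := by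
    rw [Complex.sq_norm, Complex.normSq_apply]
    simp [Complex.add_re, Complex.add_im]
    ring
  nlinarith [norm_nonneg z, norm_nonneg (z + Complex.I)]

/-- Phragmén–Lindelöf style maximum principle for the upper half plane:
a bounded holomorphic function with boundary limsup bounds. -/
lemma maxp_halfplane {g : ℂ → ℂ} (hg : DifferentiableOn ℂ g H)
    {M Cb : ℝ} (hCb : 0 < Cb) (hMC : Cb ≤ M)
    (hM : ∀ z : ℂ, 0 < z.im → ‖g z‖ ≤ M)
    (hb : ∀ x : ℝ, ∀ ε > 0, ∀ᶠ z in 𝓝[H] (x : ℂ), ‖g z‖ ≤ Cb + ε)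
    {z₁ : ℂ} (hz₁ : 0 < z₁.im) : ‖g z₁‖ ≤ Cb := by
  have hM0 : 0 < M := lt_of_lt_of_le hCb hMC
  have key : ∀ ε > 0, ∀ k : ℕ, ‖g z₁‖ ^ k ≤ (Cb + ε) ^ k * ‖z₁ + Complex.I‖ := by
    intro ε hε k
    set R : ℝ := max (‖z₁‖ + 1) (1 + M ^ k / Cb ^ k) with hRdef
    have hR1 : ‖z₁‖ + 1 ≤ R := le_max_left _ _
    have hR2 : 1 + M ^ k / Cb ^ k ≤ R := le_max_right _ _
    have hRpos : 0 < R := lt_of_lt_of_le (by positivity) hR1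
    set U : Set ℂ := H ∩ Metric.ball 0 R with hUdef
    set G : ℂ → ℂ := fun z => g z ^ k * (z + Complex.I)⁻¹ with hGdef
    have hUopen : IsOpen U := isOpen_H.inter Metric.isOpen_ball
    have hUb : Bornology.IsBounded U :=
      Metric.isBounded_ball.subset inter_subset_right
    have hUpc : IsPreconnected U :=
      ((convex_halfSpace_im_gt 0 : Convex ℝ H).inter (convex_ball 0 R)).isPreconnected
    have hzI : ∀ z : ℂ, 0 < z.im → z + Complex.I ≠ 0 := by
      intro z hz h0
      have h1 : (z + Complex.I).im = 0 := by rw [h0]; simp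
      simp only [Complex.add_im, Complex.I_im] at h1
      linarith
    have hGdiff : DifferentiableOn ℂ G U := by
      apply DifferentiableOn.mul
      · exact (hg.mono inter_subset_left).pow k
      · exact DifferentiableOn.inv
          ((differentiable_id.add_const Complex.I).differentiableOn)
          (fun z hz => hzI z hz.1)
    have hGz : ∀ z : ℂ, 0 < z.im → ‖G z‖ = ‖g z‖ ^ k / ‖z + Complex.I‖ := by
      intro z hz
      rw [hGdef]
      simp [norm_mul, norm_pow, norm_inv, div_eq_mul_inv]
    have hbd : ∀ p ∈ frontier U, ∀ ε' > 0,
        ∀ᶠ z in 𝓝[U] p, ‖G z‖ ≤ (Cb + ε) ^ k + ε' := by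
      intro p hpf ε' hε'
      have hpcl : p ∈ closure U := frontier_subset_closure hpf
      have hpim : 0 ≤ p.im := closure_H (closure_mono inter_subset_left hpcl)
      have hpball : ‖p‖ ≤ R := by
        have h6 := closure_mono inter_subset_right hpcl
        rw [closure_ball (0:ℂ) hRpos.ne'] at h6
        simpa [dist_zero_right] using h6
      rcases eq_or_lt_of_le hpim with him0 | him0
      · have hpx : p = ((p.re : ℝ) : ℂ) := Complex.ext rfl (by simp [← him0])
        have hb' := hb p.re ε hε
        have hmono : 𝓝[U] p ≤ 𝓝[H] ((p.re : ℝ) : ℂ) := by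
          rw [← hpx]; exact nhdsWithin_mono _ inter_subset_left
        filter_upwards [hb'.filter_mono hmono, eventually_mem_nhdsWithin] with z hz hzU
        have h1 : 1 ≤ ‖z + Complex.I‖ := norm_add_I_ge_one (le_of_lt hzU.1)
        rw [hGz z hzU.1]
        have hpow : ‖g z‖ ^ k ≤ (Cb + ε) ^ k := pow_le_pow_left₀ (norm_nonneg _) hz k
        calc ‖g z‖ ^ k / ‖z + Complex.I‖ ≤ ‖g z‖ ^ k := by
              apply div_le_self (by positivity) h1
          _ ≤ (Cb + ε) ^ k := hpow
          _ ≤ (Cb + ε) ^ k + ε' := by linarith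
      · have hpnotU : p ∉ U := by
          intro hcon
          exact (hpf.2) (by rw [hUopen.interior_eq]; exact hcon)
        have hpR : R ≤ ‖p‖ := by
          by_contra hlt; push_neg at hlt
          exact hpnotU ⟨him0, by simpa [Metric.mem_ball, dist_zero_right] using hlt⟩
        have hpR' : ‖p‖ = R := le_antisymm hpball hpR
        have hO : IsOpen {z : ℂ | R - 1 < ‖z‖} := isOpen_lt continuous_const continuous_norm
        have hev : ∀ᶠ z in 𝓝[U] p, R - 1 < ‖z‖ :=
          eventually_nhdsWithin_of_eventually_nhds
            (hO.eventually_mem (by simp only [mem_setOf_eq, hpR']; linarith))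
        filter_upwards [hev, eventually_mem_nhdsWithin] with z hz hzU
        rw [hGz z hzU.1]
        have h2 : ‖g z‖ ^ k ≤ M ^ k := pow_le_pow_left₀ (norm_nonneg _) (hM z hzU.1) k
        have h4 : M ^ k / Cb ^ k ≤ R - 1 := by linarith
        have h5 : 0 < R - 1 := lt_of_lt_of_le (by positivity) h4
        have h3 : R - 1 ≤ ‖z + Complex.I‖ :=
          le_trans hz.le (norm_le_norm_add_I hzU.1.le)
        calc ‖g z‖ ^ k / ‖z + Complex.I‖ ≤ M ^ k / (R - 1) :=
              div_le_div₀ (by positivity) h2 h5 h3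
          _ ≤ Cb ^ k := by
              rw [div_le_iff₀ h5]
              calc M ^ k = Cb ^ k * (M ^ k / Cb ^ k) := by
                    field_simp
                _ ≤ Cb ^ k * (R - 1) := by
                    apply mul_le_mul_of_nonneg_left h4 (by positivity)
          _ ≤ (Cb + ε) ^ k := pow_le_pow_left₀ hCb.le (by linarith) k
          _ ≤ (Cb + ε) ^ k + ε' := by linarith
    have hz₁U : z₁ ∈ U := ⟨hz₁, by rw [Metric.mem_ball, dist_zero_right]; linarith⟩
    have hfin := maxp hUopen hUb hUpc hGdiff hbd z₁ hz₁U
    rw [hGz z₁ hz₁] at hfin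
    have hI1 : (0:ℝ) < ‖z₁ + Complex.I‖ := lt_of_lt_of_le one_pos (norm_add_I_ge_one hz₁.le)
    rw [div_le_iff₀ hI1] at hfin
    exact hfin
  have h2 : ∀ ε > 0, ‖g z₁‖ ≤ Cb + ε := by
    intro ε hε
    by_contra hgt
    push_neg at hgt
    have hr : 1 < ‖g z₁‖ / (Cb + ε) := (one_lt_div (by positivity)).mpr hgt
    have htend := tendsto_pow_atTop_atTop_of_one_lt hr
    obtain ⟨k, hk⟩ := (htend.eventually_gt_atTop ‖z₁ + Complex.I‖).exists
    have hkey := key ε hε k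
    rw [div_pow, lt_div_iff₀ (by positivity)] at hk
    nlinarith [hk, hkey]
  by_contra hfin
  push_neg at hfin
  have := h2 ((‖g z₁‖ - Cb) / 2) (by linarith)
  linarith

/-- An entire function of exponential type bounded on the real axis satisfies
`‖f z‖ ≤ C e^{a Im z}` on the closed upper half plane. -/
lemma type_bound {f : ℂ → ℂ} (hf : Differentiable ℂ f) {a C : ℝ} (ha : 0 < a)
    (hC : 0 < C) (hgrow : ∀ z : ℂ, ‖f z‖ ≤ C * Real.exp (a * ‖z‖))
    (hre : ∀ x : ℝ, ‖f (x : ℂ)‖ ≤ C) {z : ℂ} (hz : 0 ≤ z.im) :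
    ‖f z‖ ≤ C * Real.exp (a * z.im) := by
  set F : ℂ → ℂ := fun w => f w * Complex.exp ((a : ℂ) * w * Complex.I) with hF
  have hFd : Differentiable ℂ F :=
    hf.mul ((Complex.differentiable_exp).comp
      (((differentiable_const _).mul differentiable_id).mul (differentiable_const _)))
  have hre' : ∀ w : ℂ, ((a : ℂ) * w * Complex.I).re = -(a * w.im) := by
    intro w
    simp [Complex.mul_re, Complex.mul_im]
  have hFnorm : ∀ w : ℂ, ‖F w‖ = ‖f w‖ * Real.exp (-(a * w.im)) := by
    intro w
    rw [hF]
    simp only [norm_mul, Complex.norm_exp, hre' w]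
  have hBig : ∀ s : Set ℂ, F =O[Bornology.cobounded ℂ ⊓ Filter.principal s]
      fun z => Real.exp (2 * a * ‖z‖ ^ (1:ℝ)) := by
    intro s
    apply Asymptotics.IsBigO.of_bound C
    apply Filter.Eventually.of_forall
    intro w
    have h1 : ‖F w‖ ≤ C * Real.exp (2 * a * ‖w‖) := by
      rw [hFnorm w]
      have h2 : ‖f w‖ ≤ C * Real.exp (a * ‖w‖) := hgrow w
      have h3 : Real.exp (-(a * w.im)) ≤ Real.exp (a * ‖w‖) := by
        apply Real.exp_le_exp.mpr
        have := Complex.abs_im_le_norm w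
        have h4 : -w.im ≤ |w.im| := neg_le_abs _
        nlinarith
      calc ‖f w‖ * Real.exp (-(a * w.im))
          ≤ (C * Real.exp (a * ‖w‖)) * Real.exp (a * ‖w‖) := by
            apply mul_le_mul h2 h3 (Real.exp_nonneg _)
            positivity
        _ = C * Real.exp (2 * a * ‖w‖) := by
            rw [mul_assoc, ← Real.exp_add]
            ring_nf
    calc ‖F w‖ ≤ C * Real.exp (2 * a * ‖w‖) := h1
      _ = C * ‖Real.exp (2 * a * ‖w‖ ^ (1:ℝ))‖ := by
          rw [Real.norm_eq_abs, _root_.abs_of_pos (Real.exp_pos _), Real.rpow_one]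
  have hreF : ∀ x : ℝ, ‖F (x : ℂ)‖ ≤ C := by
    intro x
    rw [hFnorm]
    simpa using hre x
  have himF : ∀ x : ℝ, 0 ≤ x → ‖F ((x : ℂ) * Complex.I)‖ ≤ C := by
    intro x hx
    rw [hFnorm]
    have him : ((x : ℂ) * Complex.I).im = x := by simp
    have hnorm : ‖(x : ℂ) * Complex.I‖ = x := by
      simp [_root_.abs_of_nonneg hx]
    rw [him]
    have h2 := hgrow ((x : ℂ) * Complex.I)
    rw [hnorm] at h2
    calc ‖f ((x : ℂ) * Complex.I)‖ * Real.exp (-(a * x))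
        ≤ (C * Real.exp (a * x)) * Real.exp (-(a * x)) :=
          mul_le_mul_of_nonneg_right h2 (Real.exp_nonneg _)
      _ = C := by rw [mul_assoc, ← Real.exp_add]; simp
  have hFb : ‖F z‖ ≤ C := by
    rcases le_or_gt 0 z.re with hzre | hzre
    · exact PhragmenLindelof.quadrant_I hFd.diffContOnCl
        ⟨1, one_lt_two, 2 * a, hBig _⟩ (fun x _ => hreF x) himF hzre hz
    · exact PhragmenLindelof.quadrant_II hFd.diffContOnCl
        ⟨1, one_lt_two, 2 * a, hBig _⟩ (fun x _ => hreF x) himF hzre.le hz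
  have hcalc : ‖f z‖ = ‖F z‖ * Real.exp (a * z.im) := by
    rw [hFnorm z, mul_assoc, ← Real.exp_add]
    simp
  rw [hcalc]
  exact mul_le_mul_of_nonneg_right hFb (Real.exp_nonneg _)

section Poisson

/-- The Poisson kernel of the upper half plane. -/
def ker (z : ℂ) (t : ℝ) : ℝ := z.im / ((t - z.re) ^ 2 + z.im ^ 2)

lemma ker_nonneg {z : ℂ} (hz : 0 < z.im) (t : ℝ) : 0 ≤ ker z t := by
  apply div_nonneg hz.le; positivity

lemma ker_eq {z : ℂ} (hz : 0 < z.im) :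
    (fun t : ℝ => ker z t) = fun t : ℝ => z.im⁻¹ * (1 + ((t - z.re) * z.im⁻¹) ^ 2)⁻¹ := by
  funext t
  have hz' : z.im ≠ 0 := hz.ne'
  have hd : (t - z.re) ^ 2 + z.im ^ 2 ≠ 0 := by positivity
  rw [ker]
  field_simp
  ring

lemma ker_integrable {z : ℂ} (hz : 0 < z.im) : Integrable (fun t => ker z t) := by
  have hz' : z.im ≠ 0 := hz.ne'
  have h1 : Integrable (fun s : ℝ => (1 + (s * z.im⁻¹) ^ 2)⁻¹) :=
    (integrable_comp_mul_right_iff (fun w : ℝ => (1 + w ^ 2)⁻¹)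
      (inv_ne_zero hz')).mpr integrable_inv_one_add_sq
  have h2 : Integrable (fun t : ℝ => (1 + ((t - z.re) * z.im⁻¹) ^ 2)⁻¹) :=
    h1.comp_sub_right z.re
  rw [ker_eq hz]
  exact h2.const_mul _

lemma ker_integral {z : ℂ} (hz : 0 < z.im) : ∫ t : ℝ, ker z t = Real.pi := by
  have hz' : z.im ≠ 0 := hz.ne'
  rw [ker_eq hz, MeasureTheory.integral_const_mul]
  rw [show (fun t : ℝ => (1 + ((t - z.re) * z.im⁻¹) ^ 2)⁻¹)
      = fun t : ℝ => (fun s : ℝ => (1 + (s * z.im⁻¹) ^ 2)⁻¹) (t - z.re) from rfl]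
  rw [integral_sub_right_eq_self (fun s : ℝ => (1 + (s * z.im⁻¹) ^ 2)⁻¹) z.re]
  rw [MeasureTheory.Measure.integral_comp_mul_right (fun w : ℝ => (1 + w ^ 2)⁻¹) z.im⁻¹]
  rw [integral_univ_inv_one_add_sq, inv_inv, smul_eq_mul, _root_.abs_of_pos hz]
  field_simp

variable {φ : ℝ → ℝ} {B n : ℝ}

/-- The (real) Poisson integral of `φ`. -/
def poi (φ : ℝ → ℝ) (z : ℂ) : ℝ := ∫ t : ℝ, φ t * ker z t

/-- The holomorphic companion of the Poisson integral. -/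
def hol (φ : ℝ → ℝ) (z : ℂ) : ℂ := ∫ t : ℝ, (φ t : ℂ) * ((t : ℂ) - z)⁻¹

lemma hol_integrand_integrable (hφc : Continuous φ)
    (hsupp : ∀ t : ℝ, t ∉ Icc (-n) n → φ t = 0) {z : ℂ} (hz : z.im ≠ 0) :
    Integrable (fun t : ℝ => (φ t : ℂ) * ((t : ℂ) - z)⁻¹) := by
  have hne : ∀ t : ℝ, (t : ℂ) - z ≠ 0 := by
    intro t h0
    apply hz
    have h1 : ((t : ℂ) - z).im = 0 := by rw [h0]; rfl
    simpa using h1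
  have hcont : Continuous fun t : ℝ => (φ t : ℂ) * ((t : ℂ) - z)⁻¹ := by
    apply (Complex.continuous_ofReal.comp hφc).mul
    exact Continuous.inv₀ (by continuity) hne
  apply hcont.integrable_of_hasCompactSupport
  apply HasCompactSupport.intro (isCompact_Icc (a := -n) (b := n))
  intro t ht
  simp [hsupp t ht]

lemma poi_integrand_integrable (hφc : Continuous φ)
    (hsupp : ∀ t : ℝ, t ∉ Icc (-n) n → φ t = 0) {z : ℂ} (hz : 0 < z.im) :
    Integrable (fun t : ℝ => φ t * ker z t) := by
  have hcont : Continuous fun t : ℝ => φ t * ker z t := by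
    apply hφc.mul
    apply Continuous.div continuous_const (by continuity)
    intro t
    have : (0:ℝ) < (t - z.re) ^ 2 + z.im ^ 2 := by positivity
    exact this.ne'
  apply hcont.integrable_of_hasCompactSupport
  apply HasCompactSupport.intro (isCompact_Icc (a := -n) (b := n))
  intro t ht
  simp [hsupp t ht]

lemma im_hol (hφc : Continuous φ) (hsupp : ∀ t : ℝ, t ∉ Icc (-n) n → φ t = 0)
    {z : ℂ} (hz : 0 < z.im) : (hol φ z).im = poi φ z := by
  rw [hol, poi, ← RCLike.im_eq_complex_im]
  rw [← integral_im (hol_integrand_integrable hφc hsupp hz.ne')]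
  rw [RCLike.im_eq_complex_im]
  congr 1
  funext t
  rw [Complex.mul_im]
  simp only [Complex.ofReal_re, Complex.ofReal_im, zero_mul, add_zero]
  congr 1
  rw [Complex.inv_im, ker]
  have h1 : ((t : ℂ) - z).im = -z.im := by simp
  have h2 : ((t : ℂ) - z).re = t - z.re := by simp
  rw [Complex.normSq_apply, h1, h2]
  rw [neg_neg]
  congr 1
  ring

lemma hol_differentiableOn (hφc : Continuous φ)
    (hsupp : ∀ t : ℝ, t ∉ Icc (-n) n → φ t = 0) :
    DifferentiableOn ℂ (hol φ) H := by
  intro z₀ hz₀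
  have hz₀im : 0 < z₀.im := hz₀
  set ε : ℝ := z₀.im / 2 with hε
  have hεpos : 0 < ε := by positivity
  have him : ∀ w ∈ Metric.ball z₀ ε, ε ≤ w.im := by
    intro w hw
    rw [Metric.mem_ball] at hw
    have h1 : |w.im - z₀.im| ≤ dist w z₀ := by
      rw [Complex.dist_eq]
      have := Complex.abs_im_le_norm (w - z₀)
      simpa using this
    have h2 := abs_le.mp (le_of_lt (lt_of_le_of_lt h1 hw))
    rw [hε]
    linarith [h2.1]
  have hball : ∀ w ∈ Metric.ball z₀ ε, ∀ t : ℝ, (t : ℂ) - w ≠ 0 := by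
    intro w hw t h0
    have h1 : ((t : ℂ) - w).im = 0 := by rw [h0]; rfl
    have h2 : ((t : ℂ) - w).im = -w.im := by simp
    have := him w hw
    rw [h2] at h1
    linarith
  have hnormlb : ∀ w ∈ Metric.ball z₀ ε, ∀ t : ℝ, ε ≤ ‖(t : ℂ) - w‖ := by
    intro w hw t
    have h2 : |((t : ℂ) - w).im| ≤ ‖(t : ℂ) - w‖ := Complex.abs_im_le_norm _
    have h3 : ((t : ℂ) - w).im = -w.im := by simp
    rw [h3, abs_neg, _root_.abs_of_pos (lt_of_lt_of_le hεpos (him w hw))] at h2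
    exact le_trans (him w hw) h2
  set F : ℂ → ℝ → ℂ := fun w t => (φ t : ℂ) * ((t : ℂ) - w)⁻¹ with hF
  set F' : ℂ → ℝ → ℂ := fun w t => (φ t : ℂ) * (((t : ℂ) - w) ^ 2)⁻¹ with hF'
  set bound : ℝ → ℝ := fun t => |φ t| * (ε ^ 2)⁻¹ with hbound
  have key := hasDerivAt_integral_of_dominated_loc_of_deriv_le (F := F) (F' := F')
    (bound := bound) (μ := volume) (x₀ := z₀) (s := Metric.ball z₀ ε) (Metric.ball_mem_nhds z₀ hεpos) ?_ ?_ ?_ ?_ ?_ ?_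
  · exact key.2.differentiableAt.differentiableWithinAt
  · -- measurability of F w for w near z₀
    apply Filter.Eventually.of_forall
    intro w
    by_cases hw : w.im = 0
    · -- crude: measurable anyway? F w may be discontinuous at one point; use aestrongly measurable:
      -- φ t * (t - w)⁻¹ is measurable as a function of t
      apply Measurable.aestronglyMeasurable
      apply Measurable.mul
      · exact (Complex.measurable_ofReal.comp hφc.measurable)
      · apply Measurable.inv
        apply Measurable.sub _ measurable_const
        exact Complex.measurable_ofReal
    · exact (Continuous.aestronglyMeasurable (by
        apply (Complex.continuous_ofReal.comp hφc).mul
        apply Continuous.inv₀ (by continuity)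
        intro t h0
        apply hw
        have h1 : ((t : ℂ) - w).im = 0 := by rw [h0]; rfl
        simpa using h1))
  · exact hol_integrand_integrable hφc hsupp hz₀im.ne'
  · -- AEStronglyMeasurable (F' z₀)
    apply Measurable.aestronglyMeasurable
    apply Measurable.mul (Complex.measurable_ofReal.comp hφc.measurable)
    apply Measurable.inv
    apply Measurable.pow_const
    exact (Complex.measurable_ofReal.sub measurable_const)
  · -- bound
    apply Filter.Eventually.of_forall
    intro t w hw
    rw [hF', hbound]
    rw [norm_mul, norm_inv, norm_pow]
    have h1 : ε ≤ ‖(t : ℂ) - w‖ := hnormlb w hw t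
    have h2 : ‖(φ t : ℂ)‖ = |φ t| := by
      rw [Complex.norm_real, Real.norm_eq_abs]
    rw [h2]
    apply mul_le_mul_of_nonneg_left _ (abs_nonneg _)
    apply inv_anti₀ (by positivity)
    exact pow_le_pow_left₀ hεpos.le h1 2
  · -- integrability of bound
    apply Integrable.mul_const
    apply hφc.abs.integrable_of_hasCompactSupport
    apply HasCompactSupport.intro (isCompact_Icc (a := -n) (b := n))
    intro t ht
    simp [hsupp t ht]
  · -- differentiability
    apply Filter.Eventually.of_forall
    intro t w hw
    have hne : (t : ℂ) - w ≠ 0 := hball w hw t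
    have hd : HasDerivAt (fun w : ℂ => (t : ℂ) - w) (-1) w := by
      simpa using ((hasDerivAt_id w).const_sub (t : ℂ))
    have hinv := hd.inv hne
    -- hinv : HasDerivAt (fun w => ((t:ℂ) - w)⁻¹) (-(-1) / ((t:ℂ) - w)^2) w
    have heq : -(-1 : ℂ) / ((t : ℂ) - w) ^ 2 = (((t : ℂ) - w) ^ 2)⁻¹ := by
      rw [neg_neg, one_div]
    rw [heq] at hinv
    exact hinv.const_mul (φ t : ℂ)

lemma poi_le (hφc : Continuous φ) (hφ0 : ∀ t, 0 ≤ φ t) (hφB : ∀ t, φ t ≤ B)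
    (hsupp : ∀ t : ℝ, t ∉ Icc (-n) n → φ t = 0) {z : ℂ} (hz : 0 < z.im) :
    poi φ z ≤ B * Real.pi := by
  rw [poi]
  calc (∫ t : ℝ, φ t * ker z t) ≤ ∫ t : ℝ, B * ker z t := by
        apply integral_mono (poi_integrand_integrable hφc hsupp hz)
          ((ker_integrable hz).const_mul B)
        intro t
        exact mul_le_mul_of_nonneg_right (hφB t) (ker_nonneg hz t)
    _ = B * Real.pi := by rw [MeasureTheory.integral_const_mul, ker_integral hz]

lemma poi_nonneg (hφc : Continuous φ) (hφ0 : ∀ t, 0 ≤ φ t)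
    (hsupp : ∀ t : ℝ, t ∉ Icc (-n) n → φ t = 0) {z : ℂ} (hz : 0 < z.im) :
    0 ≤ poi φ z := by
  apply integral_nonneg
  intro t
  exact mul_nonneg (hφ0 t) (ker_nonneg hz t)

lemma poi_boundary (hφc : Continuous φ) (hφ0 : ∀ t, 0 ≤ φ t) (hφB : ∀ t, φ t ≤ B)
    (hn : 0 < n) (hsupp : ∀ t : ℝ, t ∉ Icc (-n) n → φ t = 0) (x : ℝ)
    {ε : ℝ} (hε : 0 < ε) :
    ∀ᶠ z in 𝓝[H] (x : ℂ), Real.pi⁻¹ * poi φ z ≤ φ x + ε := by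
  have hπ : (0:ℝ) < Real.pi := Real.pi_pos
  have hB0 : 0 ≤ B := le_trans (hφ0 0) (hφB 0)
  obtain ⟨δ, hδ0, hδ⟩ : ∃ δ > 0, ∀ t : ℝ, |t - x| ≤ δ → φ t ≤ φ x + ε / 2 := by
    obtain ⟨δ, hδ0, h⟩ := Metric.continuousAt_iff.mp hφc.continuousAt (ε / 2) (by positivity)
    refine ⟨δ / 2, by positivity, fun t ht => ?_⟩
    have h2 := h (show dist t x < δ by rw [Real.dist_eq]; linarith)
    rw [Real.dist_eq] at h2
    have h3 := abs_lt.mp h2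
    linarith [h3.1, h3.2]
  set D : ℝ := 8 * (n + 1) * (B + 1) with hD
  have hD0 : 0 < D := by rw [hD]; positivity
  set y₀ : ℝ := min 1 (ε * Real.pi * δ ^ 2 / (2 * D)) with hy₀
  have hy₀0 : 0 < y₀ := lt_min one_pos (by positivity)
  have h1 : ∀ᶠ z : ℂ in 𝓝 (x : ℂ), |z.re - x| < δ / 2 := by
    have hc : ContinuousAt (fun z : ℂ => |z.re - x|) (x : ℂ) :=
      ((Complex.continuous_re.sub continuous_const).abs).continuousAt
    have h0 : |((x : ℂ)).re - x| < δ / 2 := by simp; positivity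
    exact hc.eventually_lt_const h0
  have h2 : ∀ᶠ z : ℂ in 𝓝 (x : ℂ), z.im < y₀ := by
    have hc : ContinuousAt (fun z : ℂ => z.im) (x : ℂ) := Complex.continuous_im.continuousAt
    have h0 : ((x : ℂ)).im < y₀ := by simpa using hy₀0
    exact hc.eventually_lt_const h0
  filter_upwards [eventually_nhdsWithin_of_eventually_nhds (h1.and h2),
    eventually_mem_nhdsWithin] with z hz hzH
  obtain ⟨hz1, hz2⟩ := hz
  have hzim : 0 < z.im := hzH
  set A : Set ℝ := Icc (x - δ) (x + δ) with hA
  have hmA : MeasurableSet A := measurableSet_Icc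
  have hint : Integrable (fun t => φ t * ker z t) := poi_integrand_integrable hφc hsupp hzim
  have hsplit : poi φ z = (∫ t in A, φ t * ker z t) + ∫ t in Aᶜ, φ t * ker z t := by
    rw [poi, ← integral_add_compl hmA hint]
  have hfirst : (∫ t in A, φ t * ker z t) ≤ (φ x + ε / 2) * Real.pi := by
    have hstep : (∫ t in A, φ t * ker z t) ≤ ∫ t in A, (φ x + ε / 2) * ker z t := by
      apply setIntegral_mono_on hint.integrableOn
        (((ker_integrable hzim).const_mul _).integrableOn) hmA
      intro t ht
      apply mul_le_mul_of_nonneg_right _ (ker_nonneg hzim t)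
      apply hδ t
      rw [abs_le]
      exact ⟨by linarith [ht.1], by linarith [ht.2]⟩
    have hstep2 : (∫ t in A, (φ x + ε / 2) * ker z t) ≤ (φ x + ε / 2) * Real.pi := by
      rw [← ker_integral hzim, ← MeasureTheory.integral_const_mul]
      apply setIntegral_le_integral ((ker_integrable hzim).const_mul _)
      apply Filter.Eventually.of_forall
      intro t
      exact mul_nonneg (by linarith [hφ0 x]) (ker_nonneg hzim t)
    linarith
  have hsecond : (∫ t in Aᶜ, φ t * ker z t) ≤ B * (4 * z.im / δ ^ 2) * (2 * n + 1) := by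
    set c : ℝ := B * (4 * z.im / δ ^ 2) with hc
    have hc0 : 0 ≤ c := by rw [hc]; positivity
    have hIccm : MeasurableSet (Icc (-n) n) := measurableSet_Icc
    have hindint : Integrable ((Icc (-n) n).indicator fun _ => c) := by
      rw [integrable_indicator_iff hIccm]
      apply (integrableOn_const_iff (C := c)).mpr
      right
      exact measure_Icc_lt_top
    have hstep : (∫ t in Aᶜ, φ t * ker z t)
        ≤ ∫ t in Aᶜ, (Icc (-n) n).indicator (fun _ => c) t := by
      apply setIntegral_mono_on hint.integrableOn hindint.integrableOn hmA.compl
      intro t ht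
      by_cases htn : t ∈ Icc (-n) n
      · rw [indicator_of_mem htn]
        have hker : ker z t ≤ 4 * z.im / δ ^ 2 := by
          have htA : δ < |t - x| := by
            rw [hA] at ht
            simp only [mem_compl_iff, mem_Icc, not_and_or, not_le] at ht
            rcases ht with h | h
            · rw [abs_sub_comm, _root_.abs_of_pos (by linarith)]; linarith
            · rw [_root_.abs_of_pos (by linarith)]; linarith
          have htc : δ / 2 ≤ |t - z.re| := by
            have h4 : |t - z.re| ≥ |t - x| - |z.re - x| := by
              have := abs_sub_abs_le_abs_sub (t - x) (t - z.re)
              have h5 : (t - x) - (t - z.re) = z.re - x := by ring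
              rw [h5] at this
              linarith
            linarith
          have hsq : (δ / 2) ^ 2 ≤ (t - z.re) ^ 2 := by
            have := sq_le_sq' (by linarith [abs_nonneg (t - z.re), neg_abs_le (t - z.re)] : -(|t - z.re|) ≤ δ / 2) htc
            calc (δ / 2) ^ 2 ≤ |t - z.re| ^ 2 := this
              _ = (t - z.re) ^ 2 := sq_abs _
          rw [ker, div_le_div_iff₀ (by positivity) (by positivity)]
          calc z.im * δ ^ 2 = z.im * (4 * (δ / 2) ^ 2) := by ring
            _ ≤ z.im * (4 * ((t - z.re) ^ 2)) := by
                apply mul_le_mul_of_nonneg_left _ hzim.le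
                linarith
            _ ≤ 4 * z.im * ((t - z.re) ^ 2 + z.im ^ 2) := by nlinarith [sq_nonneg z.im, hzim.le, hsq]
        calc φ t * ker z t ≤ B * (4 * z.im / δ ^ 2) := by
              apply mul_le_mul (hφB t) hker (ker_nonneg hzim t) hB0
          _ = c := rfl
      · rw [indicator_of_notMem htn, hsupp t htn, zero_mul]
    have hstep2 : (∫ t in Aᶜ, (Icc (-n) n).indicator (fun _ => c) t)
        ≤ ∫ t : ℝ, (Icc (-n) n).indicator (fun _ => c) t := by
      apply setIntegral_le_integral hindint
      apply Filter.Eventually.of_forall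
      intro t
      exact indicator_nonneg (fun _ _ => hc0) t
    have hstep3 : (∫ t : ℝ, (Icc (-n) n).indicator (fun _ => c) t) ≤ c * (2 * n + 1) := by
      rw [MeasureTheory.integral_indicator_const _ hIccm]
      rw [measureReal_def, Real.volume_Icc, smul_eq_mul]
      rw [ENNReal.toReal_ofReal (by linarith)]
      calc (n - -n) * c = c * (2 * n) := by ring
        _ ≤ c * (2 * n + 1) := by nlinarith
    calc (∫ t in Aᶜ, φ t * ker z t) ≤ _ := hstep
      _ ≤ _ := hstep2
      _ ≤ c * (2 * n + 1) := hstep3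
  have htail : B * (4 * z.im / δ ^ 2) * (2 * n + 1) ≤ Real.pi * (ε / 2) := by
    have hy : z.im ≤ ε * Real.pi * δ ^ 2 / (2 * D) := le_trans hz2.le (min_le_right _ _)
    have hcoef : B * (4 / δ ^ 2) * (2 * n + 1) ≤ D * δ⁻¹ ^ 2 := by
      rw [hD]
      have h8 : B * 4 * (2 * n + 1) ≤ 8 * (n + 1) * (B + 1) := by nlinarith
      have hδinv : (0:ℝ) < δ⁻¹ ^ 2 := by positivity
      calc B * (4 / δ ^ 2) * (2 * n + 1) = (B * 4 * (2 * n + 1)) * δ⁻¹ ^ 2 := by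
            field_simp
        _ ≤ (8 * (n + 1) * (B + 1)) * δ⁻¹ ^ 2 := by
            apply mul_le_mul_of_nonneg_right h8 hδinv.le
    have hmain : B * (4 * z.im / δ ^ 2) * (2 * n + 1)
        = z.im * (B * (4 / δ ^ 2) * (2 * n + 1)) := by ring
    rw [hmain]
    calc z.im * (B * (4 / δ ^ 2) * (2 * n + 1)) ≤ z.im * (D * δ⁻¹ ^ 2) := by
          apply mul_le_mul_of_nonneg_left hcoef hzim.le
      _ ≤ (ε * Real.pi * δ ^ 2 / (2 * D)) * (D * δ⁻¹ ^ 2) := by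
          apply mul_le_mul_of_nonneg_right hy (by positivity)
      _ = Real.pi * (ε / 2) := by
          field_simp
  have hfin : poi φ z ≤ (φ x + ε / 2) * Real.pi + Real.pi * (ε / 2) := by
    rw [hsplit]
    linarith
  rw [inv_mul_le_iff₀ hπ]
  calc poi φ z ≤ (φ x + ε / 2) * Real.pi + Real.pi * (ε / 2) := hfin
    _ = (φ x + ε) * Real.pi := by ring
    _ = Real.pi * (φ x + ε) := by ring

lemma poi_lower (hφc : Continuous φ) (hφ0 : ∀ t, 0 ≤ φ t)
    (hsupp : ∀ t : ℝ, t ∉ Icc (-n) n → φ t = 0) (x₀ : ℝ) :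
    (2 * (1 + x₀ ^ 2))⁻¹ * ∫ t : ℝ, φ t * (1 + t ^ 2)⁻¹ ≤ poi φ ((x₀ : ℂ) + Complex.I) := by
  set z₀ : ℂ := (x₀ : ℂ) + Complex.I with hz₀
  have hz₀re : z₀.re = x₀ := by simp [hz₀]
  have hz₀im : z₀.im = 1 := by simp [hz₀]
  have him : 0 < z₀.im := by rw [hz₀im]; exact one_pos
  have h1 : Integrable (fun t => φ t * ker z₀ t) := poi_integrand_integrable hφc hsupp him
  have h2 : Integrable (fun t : ℝ => φ t * (1 + t ^ 2)⁻¹) := by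
    apply Continuous.integrable_of_hasCompactSupport
    · exact hφc.mul (Continuous.inv₀ (by continuity) (fun t => by positivity))
    · apply HasCompactSupport.intro (isCompact_Icc (a := -n) (b := n))
      intro t ht
      simp [hsupp t ht]
  rw [poi]
  calc (2 * (1 + x₀ ^ 2))⁻¹ * ∫ t : ℝ, φ t * (1 + t ^ 2)⁻¹
      = ∫ t : ℝ, (2 * (1 + x₀ ^ 2))⁻¹ * (φ t * (1 + t ^ 2)⁻¹) :=
        (MeasureTheory.integral_const_mul _ _).symm
    _ ≤ ∫ t : ℝ, φ t * ker z₀ t := by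
        apply integral_mono (h2.const_mul _) h1
        intro t
        simp only [ker, hz₀re, hz₀im]
        have hd2 : (0:ℝ) < (t - x₀) ^ 2 + 1 ^ 2 := by positivity
        have hkey : (t - x₀) ^ 2 + 1 ^ 2 ≤ 2 * (1 + x₀ ^ 2) * (1 + t ^ 2) := by
          nlinarith [sq_nonneg (t + x₀), sq_nonneg (t * x₀), sq_nonneg (t * x₀ + 1), sq_nonneg (t * x₀ - 1)]
        have h3 : ((2 * (1 + x₀ ^ 2)) * (1 + t ^ 2))⁻¹ ≤ ((t - x₀) ^ 2 + 1 ^ 2)⁻¹ :=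
          inv_anti₀ hd2 hkey
        calc (2 * (1 + x₀ ^ 2))⁻¹ * (φ t * (1 + t ^ 2)⁻¹)
            = φ t * ((2 * (1 + x₀ ^ 2)) * (1 + t ^ 2))⁻¹ := by
              have hx : (0:ℝ) < 1 + x₀ ^ 2 := by positivity
              have ht : (0:ℝ) < 1 + t ^ 2 := by positivity
              field_simp
          _ ≤ φ t * ((t - x₀) ^ 2 + 1 ^ 2)⁻¹ := mul_le_mul_of_nonneg_left h3 (hφ0 t)
          _ = φ t * (1 / ((t - x₀) ^ 2 + 1 ^ 2)) := by rw [one_div]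

end Poisson

end EntireAux

end EntireAux

open EntireAux

/-- An entire function on `ℂ` of exponential type which satisfies
`|f(x)| ≤ C e^{-ψ(x)}` on `ℝ` for a non-negative, even, locally integrable `ψ`
with `∫_ℝ ψ(r)/(1+r²) dr = ∞` vanishes identically. -/
theorem entire_one_var_stmt4
    (f : ℂ → ℂ) (hf : Differentiable ℂ f)
    (ψ : ℝ → ℝ)
    (hψ0 : ∀ x : ℝ, 0 ≤ ψ x)
    (hψeven : ∀ x : ℝ, ψ (-x) = ψ x)
    (hψloc : LocallyIntegrable ψ)
    (a C : ℝ) (ha : 0 < a) (hC : 0 < C)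
    (hgrow : ∀ z : ℂ, ‖f z‖ ≤ C * Real.exp (a * ‖z‖))
    (hreal : ∀ x : ℝ, ‖f x‖ ≤ C * Real.exp (-ψ x))
    (hI : ∫⁻ r : ℝ, ENNReal.ofReal (ψ r / (1 + r ^ 2)) = ⊤) :
    f = 0 := by
  have hπ : (0:ℝ) < Real.pi := Real.pi_pos
  have hCb : ∀ x : ℝ, ‖f (x : ℂ)‖ ≤ C := by
    intro x
    calc ‖f (x : ℂ)‖ ≤ C * Real.exp (-ψ x) := hreal x
      _ ≤ C * 1 := by
          apply mul_le_mul_of_nonneg_left _ hC.le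
          rw [Real.exp_le_one_iff]
          linarith [hψ0 x]
      _ = C := mul_one C
  have key : ∀ x₀ : ℝ, f ((x₀ : ℂ) + Complex.I) = 0 := by
    intro x₀
    by_contra hne
    set z₀ : ℂ := (x₀ : ℂ) + Complex.I with hz₀def
    have hz₀im : z₀.im = 1 := by simp [hz₀def]
    have hz₀re : z₀.re = x₀ := by simp [hz₀def]
    have hz₀H : 0 < z₀.im := by rw [hz₀im]; exact one_pos
    have hpos : 0 < ‖f z₀‖ := norm_pos_iff.mpr hne
    set c₀ : ℝ := (Real.pi * (2 * (1 + x₀ ^ 2)))⁻¹ with hc₀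
    have hc₀0 : 0 < c₀ := by rw [hc₀]; positivity
    obtain ⟨L, hL0, hL⟩ : ∃ L : ℝ, 0 < L ∧
        C * Real.exp a * Real.exp (-(c₀ * L)) < ‖f z₀‖ := by
      have ht1 : Filter.Tendsto (fun L : ℝ => c₀ * L) atTop atTop :=
        Filter.Tendsto.const_mul_atTop hc₀0 tendsto_id
      have ht2 : Filter.Tendsto (fun L : ℝ => -(c₀ * L)) atTop atBot :=
        Filter.tendsto_neg_atBot_iff.mpr ht1
      have ht3 : Filter.Tendsto (fun L : ℝ => C * Real.exp a * Real.exp (-(c₀ * L)))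
          atTop (𝓝 0) := by
        rw [show (0:ℝ) = C * Real.exp a * 0 by ring]
        exact (Real.tendsto_exp_atBot.comp ht2).const_mul _
      obtain ⟨L, hL1, hL2⟩ := ((ht3.eventually_lt_const hpos).and
        (eventually_gt_atTop 0)).exists
      exact ⟨L, hL2, hL1⟩
    -- truncation of ψ and selection of the level m
    set ρ : ℕ → ℝ → ℝ :=
      fun m t => (Icc (-(m : ℝ)) m).indicator (fun t => min (ψ t) m / (1 + t ^ 2)) t with hρ
    have hψm : AEMeasurable ψ := hψloc.aestronglyMeasurable.aemeasurable
    have hρ0 : ∀ m : ℕ, ∀ t : ℝ, 0 ≤ ρ m t := by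
      intro m t
      apply indicator_nonneg
      intro s _
      apply div_nonneg (le_min (hψ0 s) (Nat.cast_nonneg m)) (by positivity)
    have hρle : ∀ m : ℕ, ∀ t : ℝ, ρ m t ≤ (m : ℝ) * (1 + t ^ 2)⁻¹ := by
      intro m t
      simp only [hρ]
      by_cases ht : t ∈ Icc (-(m : ℝ)) m
      · rw [indicator_of_mem ht]
        rw [div_eq_mul_inv]
        apply mul_le_mul_of_nonneg_right (min_le_right _ _) (by positivity)
      · rw [indicator_of_notMem ht]
        positivity
    have hρmeas : ∀ m : ℕ, AEMeasurable (fun t => ENNReal.ofReal (ρ m t)) := by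
      intro m
      apply ENNReal.measurable_ofReal.comp_aemeasurable
      apply AEMeasurable.indicator _ measurableSet_Icc
      apply AEMeasurable.div (hψm.min aemeasurable_const)
      exact (measurable_const.add ((measurable_id.pow_const 2))).aemeasurable
    have hmono : ∀ t : ℝ, Monotone fun m : ℕ => ENNReal.ofReal (ρ m t) := by
      intro t i j hij
      apply ENNReal.ofReal_le_ofReal
      simp only [hρ]
      by_cases hti : t ∈ Icc (-(i : ℝ)) i
      · have hcast : (i : ℝ) ≤ j := Nat.cast_le.mpr hij
        have htj : t ∈ Icc (-(j : ℝ)) j := ⟨by linarith [hti.1], by linarith [hti.2]⟩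
        rw [indicator_of_mem hti, indicator_of_mem htj]
        have hden : (0:ℝ) < 1 + t ^ 2 := by positivity
        exact (div_le_div_iff_of_pos_right hden).mpr (min_le_min le_rfl hcast)
      · rw [indicator_of_notMem hti]
        exact hρ0 j t
    have hsup : ∀ t : ℝ, (⨆ m : ℕ, ENNReal.ofReal (ρ m t))
        = ENNReal.ofReal (ψ t / (1 + t ^ 2)) := by
      intro t
      apply le_antisymm
      · apply iSup_le
        intro m
        apply ENNReal.ofReal_le_ofReal
        simp only [hρ]
        by_cases ht : t ∈ Icc (-(m : ℝ)) m
        · rw [indicator_of_mem ht]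
          have hden : (0:ℝ) < 1 + t ^ 2 := by positivity
          exact (div_le_div_iff_of_pos_right hden).mpr (min_le_left _ _)
        · rw [indicator_of_notMem ht]
          apply div_nonneg (hψ0 t) (by positivity)
      · obtain ⟨m, hm1, hm2⟩ : ∃ m : ℕ, |t| ≤ m ∧ ψ t ≤ m := by
          obtain ⟨m, hm⟩ := exists_nat_ge (max |t| (ψ t))
          exact ⟨m, le_trans (le_max_left _ _) hm, le_trans (le_max_right _ _) hm⟩
        apply le_iSup_of_le m
        apply le_of_eq
        have habs := abs_le.mp hm1
        have hval : ρ m t = ψ t / (1 + t ^ 2) := by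
          simp only [hρ]
          rw [indicator_of_mem (Set.mem_Icc.mpr ⟨habs.1, habs.2⟩)]
          rw [min_eq_left hm2]
        rw [hval]
    obtain ⟨m, hm⟩ : ∃ m : ℕ, ENNReal.ofReal L < ∫⁻ t : ℝ, ENNReal.ofReal (ρ m t) := by
      have hlin : (⨆ m : ℕ, ∫⁻ t : ℝ, ENNReal.ofReal (ρ m t)) = ⊤ := by
        rw [← lintegral_iSup' hρmeas (Filter.Eventually.of_forall hmono)]
        rw [show (fun t : ℝ => ⨆ m : ℕ, ENNReal.ofReal (ρ m t))
            = fun t : ℝ => ENNReal.ofReal (ψ t / (1 + t ^ 2)) from funext hsup]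
        exact hI
      have hlt : ENNReal.ofReal L < ⨆ m : ℕ, ∫⁻ t : ℝ, ENNReal.ofReal (ρ m t) := by
        rw [hlin]; exact ENNReal.ofReal_lt_top
      exact lt_iSup_iff.mp hlt
    have hboundint : Integrable (fun t : ℝ => (m : ℝ) * (1 + t ^ 2)⁻¹) :=
      integrable_inv_one_add_sq.const_mul _
    have hfin : (∫⁻ t : ℝ, ENNReal.ofReal (ρ m t)) < ⊤ := by
      calc (∫⁻ t : ℝ, ENNReal.ofReal (ρ m t))
          ≤ ∫⁻ t : ℝ, ENNReal.ofReal ((m : ℝ) * (1 + t ^ 2)⁻¹) := by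
            apply lintegral_mono
            intro t
            exact ENNReal.ofReal_le_ofReal (hρle m t)
        _ < ⊤ := hboundint.lintegral_lt_top
    have hρsm : AEStronglyMeasurable (ρ m) volume := by
      apply AEMeasurable.aestronglyMeasurable
      apply AEMeasurable.indicator _ measurableSet_Icc
      apply AEMeasurable.div (hψm.min aemeasurable_const)
      exact (measurable_const.add ((measurable_id.pow_const 2))).aemeasurable
    have hρint : Integrable (ρ m) := by
      apply Integrable.mono' hboundint hρsm
      apply Filter.Eventually.of_forall
      intro t
      rw [Real.norm_eq_abs, _root_.abs_of_nonneg (hρ0 m t)]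
      exact hρle m t
    have hLρ : L ≤ ∫ t : ℝ, ρ m t := by
      have heq : (∫ t : ℝ, ρ m t)
          = (∫⁻ t : ℝ, ENNReal.ofReal (ρ m t)).toReal := by
        rw [integral_eq_lintegral_of_nonneg_ae
          (Filter.Eventually.of_forall (hρ0 m)) hρsm]
      rw [heq, ← ENNReal.toReal_ofReal hL0.le]
      exact ENNReal.toReal_mono hfin.ne hm.le
    -- the multiplier weight
    set N : ℝ := (m : ℝ) with hN
    have hN0 : (0:ℝ) ≤ N := Nat.cast_nonneg m
    set χ : ℝ → ℝ := fun t => max 0 (min 1 ((N + 1) - |t|)) with hχ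
    set q : ℝ → ℝ := fun t => - Real.log (max (‖f (t : ℂ)‖ / C) (Real.exp (-N))) with hq
    set φ : ℝ → ℝ := fun t => χ t * q t with hφ
    have hmaxpos : ∀ t : ℝ, 0 < max (‖f (t : ℂ)‖ / C) (Real.exp (-N)) :=
      fun t => lt_of_lt_of_le (Real.exp_pos _) (le_max_right _ _)
    have hmaxle : ∀ t : ℝ, max (‖f (t : ℂ)‖ / C) (Real.exp (-N)) ≤ 1 := by
      intro t
      apply max_le
      · rw [div_le_one₀ hC]; exact hCb t
      · rw [Real.exp_le_one_iff]; linarith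
    have hq0 : ∀ t, 0 ≤ q t := by
      intro t
      simp only [hq, neg_nonneg]
      exact Real.log_nonpos (le_of_lt (hmaxpos t)) (hmaxle t)
    have hqN : ∀ t, q t ≤ N := by
      intro t
      simp only [hq, neg_le]
      rw [Real.le_log_iff_exp_le (hmaxpos t)]
      exact le_max_right _ _
    have hχ0 : ∀ t, 0 ≤ χ t := fun t => le_max_left 0 _
    have hχle1 : ∀ t, χ t ≤ 1 := by
      intro t
      simp only [hχ]
      exact max_le zero_le_one (min_le_left _ _)
    have hφ0' : ∀ t, 0 ≤ φ t := fun t => mul_nonneg (hχ0 t) (hq0 t)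
    have hφq : ∀ t, φ t ≤ q t := by
      intro t
      calc φ t ≤ 1 * q t := mul_le_mul_of_nonneg_right (hχle1 t) (hq0 t)
        _ = q t := one_mul _
    have hφN : ∀ t, φ t ≤ N := fun t => le_trans (hφq t) (hqN t)
    have hφcont : Continuous φ := by
      apply Continuous.mul
      · apply continuous_const.max
        apply continuous_const.min
        exact continuous_const.sub continuous_abs
      · apply Continuous.neg
        have hcont : Continuous fun t : ℝ => max (‖f (t : ℂ)‖ / C) (Real.exp (-N)) :=
          (((hf.continuous.comp Complex.continuous_ofReal).norm).div_const C).max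
            continuous_const
        exact hcont.log fun t => (hmaxpos t).ne'
    have hφsupp : ∀ t : ℝ, t ∉ Icc (-(N + 1)) (N + 1) → φ t = 0 := by
      intro t ht
      have habs : N + 1 < |t| := by
        rw [mem_Icc] at ht
        push_neg at ht
        rcases lt_or_ge t (-(N + 1)) with h | h
        · rw [abs_of_neg (by linarith : t < 0)]; linarith
        · have h2 := ht h
          rw [abs_of_pos (by linarith : 0 < t)]; linarith
      have hmin : min 1 ((N + 1) - |t|) ≤ (N + 1) - |t| := min_le_right _ _
      have h0 : max 0 (min 1 ((N + 1) - |t|)) = 0 := max_eq_left (by linarith)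
      simp only [hφ, hχ, h0, zero_mul]
    have hbound : ∀ x : ℝ, ‖f (x : ℂ)‖ * Real.exp (φ x) ≤ C := by
      intro x
      set Mx : ℝ := max (‖f (x : ℂ)‖ / C) (Real.exp (-N)) with hMx
      have hMx0 : 0 < Mx := hmaxpos x
      have h1 : Real.exp (φ x) ≤ Real.exp (q x) := Real.exp_le_exp.mpr (hφq x)
      have h2 : Real.exp (q x) = Mx⁻¹ := by
        simp only [hq, hMx]
        rw [Real.exp_neg, Real.exp_log hMx0]
      have h3 : ‖f (x : ℂ)‖ ≤ C * Mx := by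
        calc ‖f (x : ℂ)‖ = C * (‖f (x : ℂ)‖ / C) := by field_simp
          _ ≤ C * Mx := mul_le_mul_of_nonneg_left (le_max_left _ _) hC.le
      calc ‖f (x : ℂ)‖ * Real.exp (φ x) ≤ ‖f (x : ℂ)‖ * Real.exp (q x) :=
            mul_le_mul_of_nonneg_left h1 (norm_nonneg _)
        _ = ‖f (x : ℂ)‖ * Mx⁻¹ := by rw [h2]
        _ ≤ (C * Mx) * Mx⁻¹ := mul_le_mul_of_nonneg_right h3 (by positivity)
        _ = C := by field_simp
    have hφint : Integrable (fun t : ℝ => φ t * (1 + t ^ 2)⁻¹) := by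
      apply Continuous.integrable_of_hasCompactSupport
      · exact hφcont.mul (Continuous.inv₀ (by continuity) fun t => by positivity)
      · apply HasCompactSupport.intro (isCompact_Icc (a := -(N + 1)) (b := N + 1))
        intro t ht
        simp [hφsupp t ht]
    have hρφ : ∀ t : ℝ, ρ m t ≤ φ t * (1 + t ^ 2)⁻¹ := by
      intro t
      by_cases ht : t ∈ Icc (-(m : ℝ)) m
      · have habs : |t| ≤ N := by
          rw [hN, abs_le]
          exact ⟨(mem_Icc.mp ht).1, (mem_Icc.mp ht).2⟩
        have hχt : χ t = 1 := by
          simp only [hχ]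
          have h1 : (1:ℝ) ≤ (N + 1) - |t| := by linarith
          rw [min_eq_left h1, max_eq_right zero_le_one]
        have hqt : min (ψ t) N ≤ q t := by
          simp only [hq, le_neg]
          rw [← Real.log_exp (-(min (ψ t) N))]
          apply Real.log_le_log (hmaxpos t)
          apply max_le
          · calc ‖f (t : ℂ)‖ / C ≤ Real.exp (-ψ t) := by
                  rw [div_le_iff₀ hC]
                  calc ‖f (t : ℂ)‖ ≤ C * Real.exp (-ψ t) := hreal t
                    _ = Real.exp (-ψ t) * C := mul_comm _ _
              _ ≤ Real.exp (-(min (ψ t) N)) := Real.exp_le_exp.mpr (by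
                  have h := min_le_left (ψ t) N
                  linarith)
          · apply Real.exp_le_exp.mpr
            have h := min_le_right (ψ t) N
            linarith
        calc ρ m t = min (ψ t) N / (1 + t ^ 2) := by
              simp only [hρ, hN]
              rw [indicator_of_mem ht]
          _ ≤ q t / (1 + t ^ 2) := (div_le_div_iff_of_pos_right (by positivity)).mpr hqt
          _ = φ t * (1 + t ^ 2)⁻¹ := by
              simp only [hφ, hχt, one_mul, div_eq_mul_inv]
      · have h0 : ρ m t = 0 := by
          simp only [hρ]
          rw [indicator_of_notMem ht]
        rw [h0]
        exact mul_nonneg (hφ0' t) (by positivity)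
    have hJ : L ≤ ∫ t : ℝ, φ t * (1 + t ^ 2)⁻¹ :=
      le_trans hLρ (integral_mono hρint hφint hρφ)
    -- the auxiliary function `g`
    set g : ℂ → ℂ := fun z =>
      f z * Complex.exp ((a : ℂ) * z * Complex.I
        - Complex.I * (Real.pi⁻¹ : ℂ) * hol φ z) with hg
    have hwre : ∀ z : ℂ, 0 < z.im →
        ((a : ℂ) * z * Complex.I - Complex.I * (Real.pi⁻¹ : ℂ) * hol φ z).re
          = -(a * z.im) + Real.pi⁻¹ * poi φ z := by
      intro z hz
      rw [Complex.sub_re]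
      have h1 : ((a : ℂ) * z * Complex.I).re = -(a * z.im) := by
        simp [Complex.mul_re, Complex.mul_im]
      have h2 : (Complex.I * (Real.pi⁻¹ : ℂ) * hol φ z).re
          = -(Real.pi⁻¹ * (hol φ z).im) := by
        simp [Complex.mul_re, Complex.mul_im]
      rw [h1, h2, im_hol hφcont hφsupp hz]
      ring
    have hgnorm : ∀ z : ℂ, 0 < z.im →
        ‖g z‖ = ‖f z‖ * Real.exp (-(a * z.im) + Real.pi⁻¹ * poi φ z) := by
      intro z hz
      rw [hg]
      simp only [norm_mul]
      rw [Complex.norm_exp, hwre z hz]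
    have hgdiff : DifferentiableOn ℂ g H := by
      apply DifferentiableOn.mul hf.differentiableOn
      apply DifferentiableOn.cexp
      apply DifferentiableOn.sub
      · apply Differentiable.differentiableOn
        exact ((differentiable_const _).mul differentiable_id).mul (differentiable_const _)
      · exact (hol_differentiableOn hφcont hφsupp).const_mul _
    have hM : ∀ z : ℂ, 0 < z.im → ‖g z‖ ≤ C * Real.exp N := by
      intro z hz
      rw [hgnorm z hz]
      have hfz : ‖f z‖ ≤ C * Real.exp (a * z.im) := type_bound hf ha hC hgrow hCb hz.le
      have hpoi2 : poi φ z ≤ Real.pi * N := by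
        calc poi φ z ≤ N * Real.pi := poi_le hφcont hφ0' hφN hφsupp hz
          _ = Real.pi * N := mul_comm _ _
      have hpoi : Real.pi⁻¹ * poi φ z ≤ N := by
        rw [inv_mul_le_iff₀ hπ]
        exact hpoi2
      calc ‖f z‖ * Real.exp (-(a * z.im) + Real.pi⁻¹ * poi φ z)
          ≤ (C * Real.exp (a * z.im)) * Real.exp (-(a * z.im) + N) := by
            apply mul_le_mul hfz (Real.exp_le_exp.mpr (by linarith))
              (Real.exp_nonneg _) (by positivity)
        _ = C * Real.exp N := by
            rw [mul_assoc, ← Real.exp_add]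
            congr 2
            ring
    have hbg : ∀ x : ℝ, ∀ ε > 0, ∀ᶠ z in 𝓝[H] (x : ℂ), ‖g z‖ ≤ C + ε := by
      intro x ε hε
      set ε₂ : ℝ := min 1 (Real.log (1 + ε / (2 * C))) with hε₂
      have hfrac : 0 < ε / (2 * C) := by positivity
      have hε₂0 : 0 < ε₂ := lt_min one_pos (Real.log_pos (by linarith))
      have hexpε₂ : Real.exp ε₂ ≤ 1 + ε / (2 * C) := by
        calc Real.exp ε₂ ≤ Real.exp (Real.log (1 + ε / (2 * C))) :=
              Real.exp_le_exp.mpr (min_le_right _ _)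
          _ = 1 + ε / (2 * C) := Real.exp_log (by linarith)
      set ε₁ : ℝ := (ε / 2) * (Real.exp (N + 1))⁻¹ with hε₁
      have hε₁0 : 0 < ε₁ := by positivity
      have hcontf : ∀ᶠ z in 𝓝[H] (x : ℂ), ‖f z‖ < ‖f (x : ℂ)‖ + ε₁ := by
        apply eventually_nhdsWithin_of_eventually_nhds
        have hc : ContinuousAt (fun z => ‖f z‖) (x : ℂ) :=
          (hf.continuous.norm).continuousAt
        exact hc.eventually_lt_const (by linarith)
      filter_upwards [hcontf, poi_boundary hφcont hφ0' hφN (by positivity : (0:ℝ) < N + 1)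
        hφsupp x hε₂0, eventually_mem_nhdsWithin] with z h1 h2 hzH
      have him : (0:ℝ) < z.im := hzH
      rw [hgnorm z him]
      have hle1 : Real.exp (-(a * z.im) + Real.pi⁻¹ * poi φ z)
          ≤ Real.exp (φ x + ε₂) := by
        apply Real.exp_le_exp.mpr
        have hneg : 0 ≤ a * z.im := mul_nonneg ha.le him.le
        linarith [h2]
      have t1 : ‖f (x : ℂ)‖ * Real.exp (φ x) * Real.exp ε₂ ≤ C * (1 + ε / (2 * C)) :=
        mul_le_mul (hbound x) hexpε₂ (Real.exp_nonneg _) hC.le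
      have t2 : ε₁ * (Real.exp (φ x) * Real.exp ε₂) ≤ ε₁ * Real.exp (N + 1) := by
        apply mul_le_mul_of_nonneg_left _ hε₁0.le
        rw [← Real.exp_add]
        apply Real.exp_le_exp.mpr
        have hb1 := hφN x
        have hb2 : ε₂ ≤ 1 := min_le_left _ _
        linarith
      have t3 : ε₁ * Real.exp (N + 1) = ε / 2 := by
        rw [hε₁]
        field_simp
      have t4 : C * (1 + ε / (2 * C)) = C + ε / 2 := by
        field_simp
      calc ‖f z‖ * Real.exp (-(a * z.im) + Real.pi⁻¹ * poi φ z)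
          ≤ (‖f (x : ℂ)‖ + ε₁) * Real.exp (φ x + ε₂) := by
            apply mul_le_mul h1.le hle1 (Real.exp_nonneg _) (by positivity)
        _ = ‖f (x : ℂ)‖ * Real.exp (φ x) * Real.exp ε₂
            + ε₁ * (Real.exp (φ x) * Real.exp ε₂) := by
            rw [Real.exp_add]; ring
        _ ≤ C * (1 + ε / (2 * C)) + ε₁ * Real.exp (N + 1) := add_le_add t1 t2
        _ = C + ε / 2 + ε / 2 := by rw [t3, t4]
        _ = C + ε := by ring
    have hmax := maxp_halfplane hgdiff hC
      (le_mul_of_one_le_right hC.le (Real.one_le_exp hN0)) hM hbg hz₀H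
    have hgz := hgnorm z₀ hz₀H
    rw [hz₀im] at hgz
    rw [hgz] at hmax
    have hpoi_lb : (2 * (1 + x₀ ^ 2))⁻¹ * L ≤ poi φ z₀ := by
      calc (2 * (1 + x₀ ^ 2))⁻¹ * L
          ≤ (2 * (1 + x₀ ^ 2))⁻¹ * ∫ t : ℝ, φ t * (1 + t ^ 2)⁻¹ :=
            mul_le_mul_of_nonneg_left hJ (by positivity)
        _ ≤ poi φ ((x₀ : ℂ) + Complex.I) := poi_lower hφcont hφ0' hφsupp x₀
        _ = poi φ z₀ := by rw [← hz₀def]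
    have hw : 0 < Real.exp (-(a * 1) + Real.pi⁻¹ * poi φ z₀) := Real.exp_pos _
    have h6 : ‖f z₀‖ ≤ C * Real.exp a * Real.exp (-(Real.pi⁻¹ * poi φ z₀)) := by
      have h7 : ‖f z₀‖ ≤ C / Real.exp (-(a * 1) + Real.pi⁻¹ * poi φ z₀) :=
        (le_div_iff₀ hw).mpr hmax
      calc ‖f z₀‖ ≤ C / Real.exp (-(a * 1) + Real.pi⁻¹ * poi φ z₀) := h7
        _ = C * Real.exp a * Real.exp (-(Real.pi⁻¹ * poi φ z₀)) := by
            rw [div_eq_mul_inv, ← Real.exp_neg, mul_assoc, ← Real.exp_add]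
            congr 2
            ring
    have h8 : Real.exp (-(Real.pi⁻¹ * poi φ z₀)) ≤ Real.exp (-(c₀ * L)) := by
      apply Real.exp_le_exp.mpr
      rw [neg_le_neg_iff]
      calc c₀ * L = Real.pi⁻¹ * ((2 * (1 + x₀ ^ 2))⁻¹ * L) := by
            rw [hc₀, mul_inv]
            ring
        _ ≤ Real.pi⁻¹ * poi φ z₀ :=
            mul_le_mul_of_nonneg_left hpoi_lb (by positivity)
    have h9 : ‖f z₀‖ ≤ C * Real.exp a * Real.exp (-(c₀ * L)) := by
      calc ‖f z₀‖ ≤ C * Real.exp a * Real.exp (-(Real.pi⁻¹ * poi φ z₀)) := h6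
        _ ≤ C * Real.exp a * Real.exp (-(c₀ * L)) :=
            mul_le_mul_of_nonneg_left h8 (by positivity)
    linarith

  -- identity theorem
  have hfreq : ∃ᶠ z in 𝓝[≠] Complex.I, f z = 0 := by
    have htend : Filter.Tendsto (fun x : ℝ => (x : ℂ) + Complex.I)
        (𝓝[≠] (0 : ℝ)) (𝓝[≠] Complex.I) := by
      rw [tendsto_nhdsWithin_iff]
      constructor
      · have h1 : Filter.Tendsto (fun x : ℝ => (x : ℂ) + Complex.I)
            (𝓝 0) (𝓝 Complex.I) := by
          have h2 := (Complex.continuous_ofReal.add (continuous_const (y := Complex.I))).tendsto (0 : ℝ)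
          simp at h2
          exact h2
        exact h1.mono_left nhdsWithin_le_nhds
      · apply eventually_nhdsWithin_of_forall
        intro x hx
        simp only [mem_compl_iff, mem_singleton_iff] at hx ⊢
        intro h0
        apply hx
        have h3 : (x : ℂ) = 0 := by
          have := congrArg (fun w : ℂ => w - Complex.I) h0
          simpa using this
        exact_mod_cast h3
    apply htend.frequently
    apply Filter.Eventually.frequently
    apply eventually_nhdsWithin_of_forall
    intro x _
    exact key x
  have hana : AnalyticOnNhd ℂ f univ := analyticOnNhd_univ_iff_differentiable.mpr hf
  have heq := hana.eqOn_zero_of_preconnected_of_frequently_eq_zero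
    isPreconnected_univ (mem_univ Complex.I) hfreq
  funext z
  exact heq (mem_univ z)
end

section
/- Let f be an entire function on ℂ and a, C > 0 constants such that |f(z)| ≤ C e^{a|z|} for all z ∈ ℂ and |f(x)| ≤ C for all x ∈ ℝ. Then the entire function g(z) = (1/C) e^{iaz} f(z) satisfies |g(z)| ≤ 1 for all z in the closed upper half plane {z ∈ ℂ : Im z ≥ 0}. -/
open Complex Set

lemma norm_g_eq (a C : ℝ) (f : ℂ → ℂ) (z : ℂ) :
    ‖(1 / (C : ℂ)) * Complex.exp (Complex.I * (a : ℂ) * z) * f z‖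
      = (1 / |C|) * Real.exp (-(a * z.im)) * ‖f z‖ := by
  rw [norm_mul, norm_mul]
  congr 2
  · simp
  · rw [Complex.norm_exp]
    congr 1
    simp [Complex.mul_re, Complex.mul_im]

/-- **Phragmén–Lindelöf bound.** If `f` is entire with `|f(z)| ≤ C e^{a|z|}` on `ℂ`
and `|f(x)| ≤ C` on `ℝ`, then `g(z) = (1/C) e^{iaz} f(z)` satisfies `|g(z)| ≤ 1` on
the closed upper half plane. -/
theorem phragmen_lindelof_stmt10
    (f : ℂ → ℂ) (hf : Differentiable ℂ f)
    (a C : ℝ) (ha : 0 < a) (hC : 0 < C)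
    (hgrow : ∀ z : ℂ, ‖f z‖ ≤ C * Real.exp (a * ‖z‖))
    (hreal : ∀ x : ℝ, ‖f x‖ ≤ C) :
    ∀ z : ℂ, 0 ≤ z.im →
      ‖(1 / (C : ℂ)) * Complex.exp (Complex.I * (a : ℂ) * z) * f z‖ ≤ 1 := by
  set g : ℂ → ℂ := fun z => (1 / (C : ℂ)) * Complex.exp (Complex.I * (a : ℂ) * z) * f z
    with hg
  have hCabs : |C| = C := abs_of_pos hC
  have hgnorm : ∀ z : ℂ, ‖g z‖ = (1 / C) * Real.exp (-(a * z.im)) * ‖f z‖ := by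
    intro z; rw [hg]; rw [norm_g_eq a C f z, hCabs]
  have hgd : Differentiable ℂ g := by
    apply Differentiable.mul _ hf
    apply Differentiable.const_mul
    exact (Complex.differentiable_exp.comp ((differentiable_const _).mul differentiable_id))
  -- growth bound
  have hO : ∀ (S : Set ℂ), g =O[Bornology.cobounded ℂ ⊓ Filter.principal S]
      fun z => Real.exp (2 * a * ‖z‖ ^ (1 : ℝ)) := by
    intro S
    apply Asymptotics.IsBigO.of_bound 1
    filter_upwards with z
    rw [one_mul, hgnorm]
    have h1 : Real.exp (-(a * z.im)) ≤ Real.exp (a * ‖z‖) := by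
      apply Real.exp_le_exp.2
      have : |z.im| ≤ ‖z‖ := Complex.abs_im_le_norm z
      nlinarith [abs_nonneg z.im, neg_abs_le z.im]
    have h2 : (1 / C) * Real.exp (-(a * z.im)) * ‖f z‖
        ≤ (1 / C) * Real.exp (a * ‖z‖) * (C * Real.exp (a * ‖z‖)) := by
      apply mul_le_mul _ (hgrow z) (norm_nonneg _) (by positivity)
      exact mul_le_mul_of_nonneg_left h1 (by positivity)
    calc (1 / C) * Real.exp (-(a * z.im)) * ‖f z‖
        ≤ (1 / C) * Real.exp (a * ‖z‖) * (C * Real.exp (a * ‖z‖)) := h2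
      _ = Real.exp (a * ‖z‖) * Real.exp (a * ‖z‖) := by field_simp
      _ = Real.exp (2 * a * ‖z‖) := by rw [← Real.exp_add]; ring_nf
      _ = ‖Real.exp (2 * a * ‖z‖ ^ (1 : ℝ))‖ := by
          rw [Real.norm_eq_abs, abs_of_pos (Real.exp_pos _), Real.rpow_one]
  -- boundary bound on real axis
  have hre : ∀ x : ℝ, ‖g x‖ ≤ 1 := by
    intro x
    rw [hgnorm]
    simp only [Complex.ofReal_im, mul_zero, neg_zero, Real.exp_zero, mul_one]
    rw [div_mul_eq_mul_div, one_mul, div_le_one hC]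
    exact hreal x
  -- boundary bound on imaginary axis
  have him : ∀ x : ℝ, 0 ≤ x → ‖g (x * Complex.I)‖ ≤ 1 := by
    intro x hx
    rw [hgnorm]
    have himz : ((x : ℂ) * Complex.I).im = x := by simp
    have hnz : ‖((x : ℂ) * Complex.I)‖ = x := by
      rw [norm_mul, Complex.norm_I, mul_one, Complex.norm_real, Real.norm_eq_abs,
        _root_.abs_of_nonneg hx]
    rw [himz]
    calc (1 / C) * Real.exp (-(a * x)) * ‖f (x * Complex.I)‖
        ≤ (1 / C) * Real.exp (-(a * x)) * (C * Real.exp (a * x)) := by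
          apply mul_le_mul_of_nonneg_left _ (by positivity)
          have := hgrow ((x : ℂ) * Complex.I); rwa [hnz] at this
      _ = 1 := by rw [Real.exp_neg]; field_simp
  intro z hz
  show ‖g z‖ ≤ 1
  rcases le_or_gt 0 z.re with hzr | hzr
  · exact PhragmenLindelof.quadrant_I (hgd.diffContOnCl)
      ⟨1, by norm_num, 2 * a, hO _⟩ (fun x _ => hre x) him hzr hz
  · exact PhragmenLindelof.quadrant_II (hgd.diffContOnCl)
      ⟨1, by norm_num, 2 * a, hO _⟩ (fun x _ => hre x) him hzr.le hz
end

section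
/- Let g be an entire function on ℂ with |g(z)| ≤ 1 for all z in the closed upper half plane {z ∈ ℂ : Im z ≥ 0}. Then for every x ∈ ℝ and y > 0, log|g(x+iy)| ≤ (1/π) ∫_ℝ y log|g(t)| / (y² + (x−t)²) dt, where the integral is taken in [−∞, ∞). -/
open MeasureTheory

/-- `negLog r` is `-log r` viewed as an element of `[0,∞]`, with the convention
`negLog 0 = ∞`.  For `0 ≤ r ≤ 1` this faithfully represents the value
`log r ∈ [-∞, 0]` (negated). -/
noncomputable def negLog (r : ℝ) : ENNReal :=
  if r = 0 then ⊤ else ENNReal.ofReal (-Real.log r)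

section AuxPoisson

open Set Complex


lemma kernel_nonneg (c x t : ℝ) : 0 ≤ c ^ 2 + (x - t) ^ 2 := by positivity

lemma kernel_cont {c : ℝ} (hc : 0 < c) (x : ℝ) :
    Continuous fun t : ℝ => c / (c ^ 2 + (x - t) ^ 2) := by
  apply continuous_const.div (by continuity)
  intro t; positivity

lemma poisson_mass_le {c : ℝ} (hc : 0 < c) (x a b : ℝ) (hab : a ≤ b) :
    ∫ t in a..b, c / (c ^ 2 + (x - t) ^ 2) ≤ Real.pi := by
  have key : ∀ t : ℝ, HasDerivAt (fun t => Real.arctan ((t - x) / c))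
      (c / (c ^ 2 + (x - t) ^ 2)) t := by
    intro t
    have h1 : HasDerivAt (fun t : ℝ => (t - x) / c) (1 / c) t := by
      simpa using ((hasDerivAt_id t).sub_const x).div_const c
    have h2 := (Real.hasDerivAt_arctan ((t - x) / c)).comp t h1
    refine h2.congr_deriv (Eq.symm ?_)
    field_simp
    ring
  have hint : IntervalIntegrable (fun t => c / (c ^ 2 + (x - t) ^ 2)) volume a b :=
    (kernel_cont hc x).intervalIntegrable a b
  rw [intervalIntegral.integral_eq_sub_of_hasDerivAt (fun t _ => key t) hint]
  have h1 := Real.arctan_lt_pi_div_two ((b - x) / c)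
  have h2 := Real.neg_pi_div_two_lt_arctan ((a - x) / c)
  linarith

lemma poisson_mass_set_le {c : ℝ} (hc : 0 < c) (x a b : ℝ) (hab : a ≤ b) {s : Set ℝ}
    (hsub : s ⊆ Set.Ioc a b) :
    ∫ t in s, c / (c ^ 2 + (x - t) ^ 2) ≤ Real.pi := by
  have hIcc : IntegrableOn (fun t => c / (c ^ 2 + (x - t) ^ 2)) (Set.Ioc a b) :=
    (kernel_cont hc x).integrableOn_Ioc
  have h1 : ∫ t in s, c / (c ^ 2 + (x - t) ^ 2) ≤ ∫ t in Set.Ioc a b, c / (c ^ 2 + (x - t) ^ 2) := by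
    apply setIntegral_mono_set hIcc
    · filter_upwards with t using by positivity
    · exact HasSubset.Subset.eventuallyLE hsub
  refine h1.trans ?_
  rw [← intervalIntegral.integral_of_le hab]
  exact poisson_mass_le hc x a b hab


variable {w : ℝ → ℝ}

lemma sub_ne_zero_of_im {z : ℂ} (hz : 0 < z.im) (t : ℝ) : (t : ℂ) - z ≠ 0 := by
  intro h
  have : ((t : ℂ) - z).im = 0 := by rw [h]; simp
  simp [Complex.sub_im] at this
  linarith

lemma F_integrable (hw : Continuous w) (hsupp : HasCompactSupport w) {z : ℂ}
    (hz : 0 < z.im) : Integrable fun t : ℝ => (w t : ℂ) * ((t : ℂ) - z)⁻¹ := by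
  apply Continuous.integrable_of_hasCompactSupport
  · exact (Complex.continuous_ofReal.comp hw).mul
      (((Complex.continuous_ofReal).sub continuous_const).inv₀ (sub_ne_zero_of_im hz))
  · apply HasCompactSupport.mul_right
    exact hsupp.comp_left (g := fun r : ℝ => (r : ℂ)) (by simp)

lemma F_im (hw : Continuous w) (hsupp : HasCompactSupport w) {z : ℂ} (hz : 0 < z.im) :
    (∫ t : ℝ, (w t : ℂ) * ((t : ℂ) - z)⁻¹).im
      = ∫ t : ℝ, w t * (z.im / (z.im ^ 2 + (z.re - t) ^ 2)) := by
  have h := integral_im (μ := (volume : Measure ℝ))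
    (f := fun t : ℝ => (w t : ℂ) * ((t : ℂ) - z)⁻¹) (F_integrable hw hsupp hz)
  rw [show RCLike.im (∫ t : ℝ, (w t : ℂ) * ((t : ℂ) - z)⁻¹)
      = (∫ t : ℝ, (w t : ℂ) * ((t : ℂ) - z)⁻¹).im from rfl] at h
  rw [← h]
  congr 1; ext t
  rw [show RCLike.im ((w t : ℂ) * ((t : ℂ) - z)⁻¹) = ((w t : ℂ) * ((t : ℂ) - z)⁻¹).im from rfl]
  rw [Complex.mul_im]
  simp only [Complex.ofReal_re, Complex.ofReal_im, zero_mul, add_zero]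
  rw [Complex.inv_im]
  congr 1
  rw [Complex.sub_im, Complex.ofReal_im, Complex.normSq_apply, Complex.sub_re, Complex.sub_im]
  simp only [Complex.ofReal_re, Complex.ofReal_im]
  ring

lemma F_diffAt (hw : Continuous w) (hsupp : HasCompactSupport w) {z : ℂ} (hz : 0 < z.im) :
    DifferentiableAt ℂ (fun z : ℂ => ∫ t : ℝ, (w t : ℂ) * ((t : ℂ) - z)⁻¹) z := by
  have hball : ∀ x ∈ Metric.ball z (z.im / 2), z.im / 2 < x.im := by
    intro x hx
    have h1 : |x.im - z.im| ≤ dist x z := by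
      rw [Complex.dist_eq]
      simpa [Complex.sub_im] using Complex.abs_im_le_norm (x - z)
    rw [Metric.mem_ball] at hx
    have := abs_sub_lt_iff.mp (lt_of_le_of_lt h1 hx)
    linarith [this.2]
  have hmeas : ∀ x : ℂ, AEStronglyMeasurable
      (fun t : ℝ => (w t : ℂ) * ((t : ℂ) - x)⁻¹) volume := by
    intro x
    exact ((Complex.measurable_ofReal.comp hw.measurable).mul
      ((Complex.measurable_ofReal.sub measurable_const).inv)).aestronglyMeasurable
  have key := hasDerivAt_integral_of_dominated_loc_of_deriv_le
    (F := fun x (t : ℝ) => (w t : ℂ) * ((t : ℂ) - x)⁻¹)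
    (F' := fun x (t : ℝ) => (w t : ℂ) * (1 / ((t : ℂ) - x) ^ 2))
    (x₀ := z) (s := Metric.ball z (z.im / 2))
    (bound := fun t : ℝ => |w t| * ((z.im / 2)⁻¹ ^ 2))
    (μ := volume) (Metric.ball_mem_nhds _ (by positivity))
    (Filter.Eventually.of_forall hmeas) (F_integrable hw hsupp hz)
    (((Complex.measurable_ofReal.comp hw.measurable).mul
      ((measurable_const.div
        (((Complex.measurable_ofReal.sub measurable_const)).pow_const 2)))).aestronglyMeasurable)
    ?_ ?_ ?_
  · exact key.2.differentiableAt
  · -- bound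
    filter_upwards with t
    intro x hx
    have him : z.im / 2 < x.im := hball x hx
    have habs : z.im / 2 ≤ ‖(t : ℂ) - x‖ := by
      have := Complex.abs_im_le_norm ((t : ℂ) - x)
      rw [Complex.sub_im, Complex.ofReal_im] at this
      have : |0 - x.im| ≤ ‖(t : ℂ) - x‖ := by simpa using this
      rw [zero_sub, abs_neg, abs_of_pos (by linarith)] at this
      linarith
    have h2 : (z.im / 2) ^ 2 ≤ ‖(t : ℂ) - x‖ ^ 2 :=
      pow_le_pow_left₀ (by positivity) habs 2
    calc ‖(w t : ℂ) * (1 / ((t : ℂ) - x) ^ 2)‖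
        = |w t| * (‖(t : ℂ) - x‖ ^ 2)⁻¹ := by
          simp [norm_div, norm_pow, Complex.norm_real, one_div]
      _ ≤ |w t| * ((z.im / 2) ^ 2)⁻¹ := by
          apply mul_le_mul_of_nonneg_left _ (abs_nonneg _)
          exact inv_anti₀ (by positivity) h2
      _ = |w t| * ((z.im / 2)⁻¹ ^ 2) := by rw [inv_pow]
  · exact (hw.abs.integrable_of_hasCompactSupport hsupp.abs).mul_const _
  · -- HasDerivAt
    filter_upwards with t
    intro x hx
    have hne : (t : ℂ) - x ≠ 0 := sub_ne_zero_of_im (lt_trans (by positivity) (hball x hx)) t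
    have h0 : HasDerivAt (fun x : ℂ => (t : ℂ) - x) (-1) x := by
      simpa using (hasDerivAt_id x).const_sub (t : ℂ)
    have h1 := h0.inv hne
    have h2 := h1.const_mul (w t : ℂ)
    refine h2.congr_deriv (Eq.symm ?_)
    field_simp

noncomputable def wcut (r : ℝ → ℝ) (n : ℕ) (t : ℝ) : ℝ :=
  (-Real.log (max (r t) (Real.exp (-(n : ℝ))))) * (max 0 (min 1 ((n : ℝ) + 1 - |t|)))

section wcut
variable {r : ℝ → ℝ} (hr : Continuous r) (hr0 : ∀ t, 0 ≤ r t) (hr1 : ∀ t, r t ≤ 1)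

lemma max_pos (n : ℕ) (t : ℝ) : 0 < max (r t) (Real.exp (-(n : ℝ))) :=
  lt_max_of_lt_right (Real.exp_pos _)

lemma max_le_one (hr1 : ∀ t, r t ≤ 1) (n : ℕ) (t : ℝ) :
    max (r t) (Real.exp (-(n : ℝ))) ≤ 1 :=
  max_le (hr1 t) (Real.exp_le_one_iff.2 (by simp))

lemma chi_nonneg (n : ℕ) (t : ℝ) : 0 ≤ max 0 (min 1 ((n : ℝ) + 1 - |t|)) := le_max_left _ _

lemma chi_le_one (n : ℕ) (t : ℝ) : max 0 (min 1 ((n : ℝ) + 1 - |t|)) ≤ 1 :=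
  max_le zero_le_one (min_le_left _ _)

lemma neglog_max_nonneg (hr1 : ∀ t, r t ≤ 1) (n : ℕ) (t : ℝ) :
    0 ≤ -Real.log (max (r t) (Real.exp (-(n : ℝ)))) := by
  rw [neg_nonneg]
  exact Real.log_nonpos (max_pos n t).le (max_le_one hr1 n t)

lemma wcut_nonneg (hr1 : ∀ t, r t ≤ 1) (n : ℕ) (t : ℝ) : 0 ≤ wcut r n t :=
  mul_nonneg (neglog_max_nonneg hr1 n t) (chi_nonneg n t)

lemma wcut_cont (hr : Continuous r) (n : ℕ) : Continuous (wcut r n) := by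
  apply Continuous.mul
  · apply Continuous.neg
    apply Continuous.log
    · exact hr.max continuous_const
    · intro t; exact (max_pos n t).ne'
  · exact continuous_const.max (continuous_const.min (continuous_const.sub continuous_abs))

lemma wcut_supp (n : ℕ) : HasCompactSupport (wcut r n) := by
  apply HasCompactSupport.intro (isCompact_Icc (a := -((n : ℝ) + 1)) (b := (n : ℝ) + 1))
  intro t ht
  have habs : (n : ℝ) + 1 ≤ |t| := by
    rcases abs_cases t with ⟨h1, _⟩ | ⟨h1, _⟩
    · rw [h1]; by_contra hcon; push_neg at hcon
      exact ht ⟨by linarith, by linarith⟩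
    · rw [h1]; by_contra hcon; push_neg at hcon
      exact ht ⟨by linarith, by linarith⟩
  have : min 1 ((n : ℝ) + 1 - |t|) ≤ 0 := le_trans (min_le_right _ _) (by linarith)
  rw [wcut, max_eq_left this, mul_zero]

lemma wcut_le (hr1 : ∀ t, r t ≤ 1) (n : ℕ) (t : ℝ) : r t ≤ Real.exp (-(wcut r n t)) := by
  set M := max (r t) (Real.exp (-(n : ℝ))) with hM
  set χ := max 0 (min 1 ((n : ℝ) + 1 - |t|)) with hχ
  have hMpos : 0 < M := max_pos n t
  have hlog : Real.log M ≤ 0 := Real.log_nonpos hMpos.le (max_le_one hr1 n t)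
  have h1 : Real.log M ≤ χ * Real.log M := by
    nlinarith [chi_le_one n t, chi_nonneg n t]
  have h2 : -(wcut r n t) = χ * Real.log M := by rw [wcut, ← hM, ← hχ]; ring
  rw [h2]
  calc r t ≤ M := le_max_left _ _
    _ = Real.exp (Real.log M) := (Real.exp_log hMpos).symm
    _ ≤ Real.exp (χ * Real.log M) := Real.exp_le_exp.2 h1

lemma wcut_mono (hr1 : ∀ t, r t ≤ 1) (t : ℝ) : Monotone fun n => wcut r n t := by
  apply monotone_nat_of_le_succ
  intro n
  rw [wcut, wcut]
  apply mul_le_mul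
  · rw [neg_le_neg_iff]
    apply Real.log_le_log (max_pos (n + 1) t)
    apply max_le_max le_rfl
    apply Real.exp_le_exp.2
    push_cast; linarith
  · apply max_le_max le_rfl
    apply min_le_min le_rfl
    push_cast
    have : |t| ≤ |t| := le_rfl
    linarith
  · exact chi_nonneg n t
  · exact neglog_max_nonneg hr1 (n + 1) t

lemma wcut_sup (hr0 : ∀ t, 0 ≤ r t) (hr1 : ∀ t, r t ≤ 1) (t : ℝ) :
    ⨆ n, ENNReal.ofReal (wcut r n t) = negLog (r t) := by
  by_cases hrt : r t = 0
  · rw [negLog, if_pos hrt]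
    rw [eq_top_iff, ← ENNReal.iSup_natCast]
    apply iSup_le
    intro k
    set n : ℕ := max k ⌈|t|⌉₊ with hn
    have hchi : max 0 (min 1 ((n : ℝ) + 1 - |t|)) = 1 := by
      have habs : |t| ≤ (n : ℝ) :=
        le_trans (Nat.le_ceil _) (by exact_mod_cast le_max_right k ⌈|t|⌉₊)
      rw [min_eq_left (by linarith), max_eq_right zero_le_one]
    have hval : wcut r n t = (n : ℝ) := by
      rw [wcut, hchi, mul_one, hrt, max_eq_right (Real.exp_pos _).le, Real.log_exp, neg_neg]
    refine le_iSup_of_le n ?_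
    rw [hval, ← ENNReal.ofReal_natCast k]
    exact ENNReal.ofReal_le_ofReal (by exact_mod_cast le_max_left k ⌈|t|⌉₊)
  · have hpos : 0 < r t := lt_of_le_of_ne (hr0 t) (Ne.symm hrt)
    rw [negLog, if_neg hrt]
    apply le_antisymm
    · apply iSup_le
      intro n
      apply ENNReal.ofReal_le_ofReal
      calc wcut r n t ≤ (-Real.log (max (r t) (Real.exp (-(n : ℝ))))) * 1 := by
            apply mul_le_mul_of_nonneg_left (chi_le_one n t) (neglog_max_nonneg hr1 n t)
        _ = -Real.log (max (r t) (Real.exp (-(n : ℝ)))) := mul_one _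
        _ ≤ -Real.log (r t) := by
            rw [neg_le_neg_iff]
            exact Real.log_le_log hpos (le_max_left _ _)
    · set n : ℕ := max ⌈-Real.log (r t)⌉₊ ⌈|t|⌉₊ with hn
      have hchi : max 0 (min 1 ((n : ℝ) + 1 - |t|)) = 1 := by
        have habs : |t| ≤ (n : ℝ) :=
          le_trans (Nat.le_ceil _) (by exact_mod_cast le_max_right _ _)
        rw [min_eq_left (by linarith), max_eq_right zero_le_one]
      have hexp : Real.exp (-(n : ℝ)) ≤ r t := by
        have h9 : -Real.log (r t) ≤ (n : ℝ) :=
          le_trans (Nat.le_ceil _) (by exact_mod_cast le_max_left _ _)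
        calc Real.exp (-(n : ℝ)) ≤ Real.exp (Real.log (r t)) :=
              Real.exp_le_exp.2 (by linarith)
          _ = r t := Real.exp_log hpos
      have hval : wcut r n t = -Real.log (r t) := by
        rw [wcut, hchi, mul_one, max_eq_left hexp]
      exact le_iSup_of_le n (by rw [hval])

end wcut

set_option maxHeartbeats 1000000 in
lemma core (g : ℂ → ℂ) (hg : Differentiable ℂ g) (hb : ∀ z : ℂ, 0 ≤ z.im → ‖g z‖ ≤ 1)
    (x y : ℝ) (hy : 0 < y) (hgz : g ((x : ℂ) + (y : ℂ) * Complex.I) ≠ 0)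
    (w : ℝ → ℝ) (hw : Continuous w) (hsupp : HasCompactSupport w)
    (hw0 : ∀ t, 0 ≤ w t) (hwle : ∀ t : ℝ, ‖g (t : ℂ)‖ ≤ Real.exp (-w t)) :
    Real.log ‖g ((x : ℂ) + (y : ℂ) * Complex.I)‖
      + Real.pi⁻¹ * ∫ t : ℝ, w t * (y / (y ^ 2 + (x - t) ^ 2)) ≤ 0 := by
  set z₀ : ℂ := (x : ℂ) + (y : ℂ) * Complex.I with hz₀
  have hz₀im : z₀.im = y := by simp [hz₀]
  have hz₀re : z₀.re = x := by simp [hz₀]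
  set F : ℂ → ℂ := fun z : ℂ => ∫ t : ℝ, (w t : ℂ) * ((t : ℂ) - z)⁻¹ with hF
  -- support bound
  obtain ⟨r, hr⟩ := hsupp.isBounded.subset_closedBall 0
  set R : ℝ := max r 1 with hR
  have hRpos : (0:ℝ) < R := lt_of_lt_of_le one_pos (le_max_right _ _)
  have hsubJ : tsupport w ⊆ Icc (-R) R := by
    intro t ht
    have := hr ht
    rw [Metric.mem_closedBall, Real.dist_eq, sub_zero] at this
    have h2 : |t| ≤ R := le_trans this (le_max_left _ _)
    exact ⟨(abs_le.mp h2).1, (abs_le.mp h2).2⟩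
  have hwzero : ∀ t : ℝ, t ∉ Icc (-R) R → w t = 0 := fun t ht =>
    image_eq_zero_of_notMem_tsupport (fun h => ht (hsubJ h))
  -- sup bound on w
  obtain ⟨W, hW⟩ := hsupp.exists_bound_of_continuous hw
  have hWbd : ∀ t, w t ≤ W := fun t => le_trans (le_abs_self _) (by simpa using hW t)
  have hWpos : 0 ≤ W := le_trans (hw0 0) (hWbd 0)
  -- integrability of w times kernel
  have hker_int : ∀ (c q : ℝ), 0 < c →
      Integrable (fun s : ℝ => w s * (c / (c ^ 2 + (q - s) ^ 2))) := by
    intro c q hc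
    exact (hw.mul (kernel_cont hc q)).integrable_of_hasCompactSupport (hsupp.mul_right)
  -- ∫ over ℝ equals ∫ over Icc
  have hint_eq : ∀ (f : ℝ → ℝ), (∀ s, s ∉ Icc (-R) R → f s = 0) →
      ∫ s : ℝ, f s = ∫ s in Icc (-R) R, f s := by
    intro f hf
    exact (setIntegral_eq_integral_of_forall_compl_eq_zero hf).symm
  -- bound on Im F
  have hImF_le : ∀ z : ℂ, 0 < z.im → (F z).im ≤ W * Real.pi := by
    intro z hz
    rw [F_im hw hsupp hz]
    have h0 : (∫ t : ℝ, w t * (z.im / (z.im ^ 2 + (z.re - t) ^ 2)))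
        = ∫ t in Icc (-R) R, w t * (z.im / (z.im ^ 2 + (z.re - t) ^ 2)) :=
      hint_eq _ (fun s hs => by rw [hwzero s hs, zero_mul])
    rw [h0]
    have h1 : ∫ t in Icc (-R) R, w t * (z.im / (z.im ^ 2 + (z.re - t) ^ 2))
        ≤ ∫ t in Icc (-R) R, W * (z.im / (z.im ^ 2 + (z.re - t) ^ 2)) := by
      apply setIntegral_mono_on ((hker_int z.im z.re hz).integrableOn)
        ((continuous_const.mul (kernel_cont hz z.re)).integrableOn_Icc) measurableSet_Icc
      intro t _
      have : (0:ℝ) ≤ z.im / (z.im ^ 2 + (z.re - t) ^ 2) := by positivity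
      exact mul_le_mul_of_nonneg_right (hWbd t) this
    refine h1.trans ?_
    rw [integral_const_mul]
    apply mul_le_mul_of_nonneg_left _ hWpos
    exact poisson_mass_set_le hz z.re (-R-1) R (by linarith)
      (fun t ht => ⟨by linarith [ht.1], ht.2⟩)
  -- ImF at z₀
  have hImF_z₀ : (F z₀).im = ∫ t : ℝ, w t * (y / (y ^ 2 + (x - t) ^ 2)) := by
    rw [F_im hw hsupp (by rw [hz₀im]; exact hy), hz₀im, hz₀re]
  have hπ := Real.pi_pos
  suffices h3 : ∀ η : ℝ, 0 < η → Real.log ‖g z₀‖ + Real.pi⁻¹ * (F z₀).im ≤ 3 * η by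
    rw [← hImF_z₀]
    by_contra hcon
    push_neg at hcon
    have := h3 ((Real.log ‖g z₀‖ + Real.pi⁻¹ * (F z₀).im) / 6) (by linarith)
    linarith
  intro η hη
  -- uniform continuity of w
  have htend : Filter.Tendsto w (Filter.cocompact ℝ) (nhds 0) := by
    have hmem : {t : ℝ | w t = 0} ∈ Filter.cocompact ℝ :=
      Filter.mem_cocompact.2 ⟨tsupport w, hsupp, fun t ht =>
        image_eq_zero_of_notMem_tsupport ht⟩
    exact tendsto_const_nhds.congr' (Filter.eventuallyEq_of_mem hmem (fun t ht => ht.symm))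
  have huc : UniformContinuous w := hw.uniformContinuous_of_tendsto_cocompact htend
  rw [Metric.uniformContinuous_iff] at huc
  obtain ⟨δ, hδpos, hδ⟩ := huc η hη
  set m : ℝ := min δ y with hm
  have hmpos : 0 < m := lt_min hδpos hy
  set ε : ℝ := min 1 (η * Real.pi * m ^ 2 / (W * 2 * R + 1)) with hεdef
  have hDpos : 0 < W * 2 * R + 1 := by positivity
  have hεpos : 0 < ε := lt_min one_pos (by positivity)
  have hεD : ε * (W * 2 * R + 1) ≤ η * Real.pi * m ^ 2 := by
    have h1 : ε ≤ η * Real.pi * m ^ 2 / (W * 2 * R + 1) := min_le_right _ _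
    calc ε * (W * 2 * R + 1) ≤ (η * Real.pi * m ^ 2 / (W * 2 * R + 1)) * (W * 2 * R + 1) :=
          mul_le_mul_of_nonneg_right h1 hDpos.le
      _ = η * Real.pi * m ^ 2 := by field_simp
  have hεδ : W * 2 * R * ε ≤ η * Real.pi * δ ^ 2 := by
    have hmδ : m ^ 2 ≤ δ ^ 2 := pow_le_pow_left₀ hmpos.le (min_le_left _ _) 2
    have h6 : η * Real.pi * m ^ 2 ≤ η * Real.pi * δ ^ 2 :=
      mul_le_mul_of_nonneg_left hmδ (by positivity)
    have e : ε * (W * 2 * R + 1) = W * 2 * R * ε + ε := by ring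
    linarith [hεpos.le]
  have hεy : W * 2 * R * ε ≤ η * Real.pi * y ^ 2 := by
    have hmy : m ^ 2 ≤ y ^ 2 := pow_le_pow_left₀ hmpos.le (min_le_right _ _) 2
    have h6 : η * Real.pi * m ^ 2 ≤ η * Real.pi * y ^ 2 :=
      mul_le_mul_of_nonneg_left hmy (by positivity)
    have e : ε * (W * 2 * R + 1) = W * 2 * R * ε + ε := by ring
    linarith [hεpos.le]
  -- the auxiliary holomorphic function
  set h : ℂ → ℂ := fun z =>
    g z * Complex.exp (-(Real.pi⁻¹ : ℂ) * Complex.I * F (z + (ε : ℂ) * Complex.I)) with hhdef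
  have hargim : ∀ z : ℂ, (z + (ε : ℂ) * Complex.I).im = z.im + ε := by
    intro z; simp
  have hnorm : ∀ z : ℂ,
      ‖h z‖ = ‖g z‖ * Real.exp (Real.pi⁻¹ * (F (z + (ε : ℂ) * Complex.I)).im) := by
    intro z
    rw [hhdef]
    simp only [norm_mul, Complex.norm_exp]
    congr 2
    simp [Complex.mul_re, Complex.mul_im]
  set H : ℂ → ℂ := fun ζ => h (ζ * Complex.I) with hHdef
  have hHb : ∀ ζ : ℂ, 0 ≤ ζ.re → ‖H ζ‖ ≤ Real.exp W := by
    intro ζ hζ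
    rw [hHdef]
    simp only []
    rw [hnorm]
    have h1 : ‖g (ζ * Complex.I)‖ ≤ 1 := hb _ (by simpa using hζ)
    have h2 : (F (ζ * Complex.I + (ε : ℂ) * Complex.I)).im ≤ W * Real.pi := by
      apply hImF_le
      rw [hargim]
      simpa using lt_of_lt_of_le hεpos (by linarith [hζ] : ε ≤ ζ.re + ε)
    have h3 : Real.pi⁻¹ * (F (ζ * Complex.I + (ε : ℂ) * Complex.I)).im ≤ W := by
      calc Real.pi⁻¹ * (F (ζ * Complex.I + (ε : ℂ) * Complex.I)).im
          ≤ Real.pi⁻¹ * (W * Real.pi) := by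
            exact mul_le_mul_of_nonneg_left h2 (by positivity)
        _ = W := by field_simp
    calc ‖g (ζ * Complex.I)‖ * Real.exp (Real.pi⁻¹ * (F (ζ * Complex.I + (ε : ℂ) * Complex.I)).im)
        ≤ 1 * Real.exp W := by
          exact mul_le_mul h1 (Real.exp_le_exp.2 h3) (Real.exp_pos _).le one_pos.le
      _ = Real.exp W := one_mul _
  -- boundary estimate
  have hbd : ∀ t : ℝ, Real.pi⁻¹ * (F ((t : ℂ) + (ε : ℂ) * Complex.I)).im ≤ w t + 2 * η := by
    intro t
    have hzim : ((t : ℂ) + (ε : ℂ) * Complex.I).im = ε := by simp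
    have hzre : ((t : ℂ) + (ε : ℂ) * Complex.I).re = t := by simp
    rw [F_im hw hsupp (by rw [hzim]; exact hεpos), hzim, hzre]
    rw [hint_eq _ (fun s hs => by rw [hwzero s hs, zero_mul])]
    set B : Set ℝ := Ioo (t - δ) (t + δ) with hB
    have hIcc_int : IntegrableOn (fun s => w s * (ε / (ε ^ 2 + (t - s) ^ 2))) (Icc (-R) R) :=
      (hker_int ε t hεpos).integrableOn
    rw [← integral_inter_add_diff measurableSet_Ioo hIcc_int]
    have hp1 : ∫ s in Icc (-R) R ∩ B, w s * (ε / (ε ^ 2 + (t - s) ^ 2))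
        ≤ (w t + η) * Real.pi := by
      have step1 : ∫ s in Icc (-R) R ∩ B, w s * (ε / (ε ^ 2 + (t - s) ^ 2))
          ≤ ∫ s in Icc (-R) R ∩ B, (w t + η) * (ε / (ε ^ 2 + (t - s) ^ 2)) := by
        apply setIntegral_mono_on
        · exact (hker_int ε t hεpos).integrableOn
        · exact ((continuous_const.mul (kernel_cont hεpos t)).integrableOn_Icc).mono_set
            inter_subset_left
        · exact (measurableSet_Icc.inter measurableSet_Ioo)
        · intro s hs
          have hdist : dist s t < δ := by
            rw [Real.dist_eq, abs_sub_lt_iff]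
            constructor <;> [linarith [hs.2.2]; linarith [hs.2.1]]
          have := hδ hdist
          rw [Real.dist_eq] at this
          have hws : w s ≤ w t + η := by
            have := (abs_sub_lt_iff.mp this).1
            linarith
          exact mul_le_mul_of_nonneg_right hws (by positivity)
      refine step1.trans ?_
      rw [integral_const_mul]
      apply mul_le_mul_of_nonneg_left _ (by linarith [hw0 t])
      exact poisson_mass_set_le hεpos t (t - δ) (t + δ) (by linarith)
        (fun s hs => ⟨hs.2.1, hs.2.2.le⟩)
    have hp2 : ∫ s in Icc (-R) R \ B, w s * (ε / (ε ^ 2 + (t - s) ^ 2))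
        ≤ W * (ε / δ ^ 2) * (2 * R) := by
      have hfin : volume (Icc (-R) R \ B) < ⊤ :=
        lt_of_le_of_lt (measure_mono diff_subset) (by rw [Real.volume_Icc]; exact ENNReal.ofReal_lt_top)
      have hb2 : ∀ s ∈ Icc (-R) R \ B, ‖w s * (ε / (ε ^ 2 + (t - s) ^ 2))‖ ≤ W * (ε / δ ^ 2) := by
        intro s hs
        have hds : δ ≤ |t - s| := by
          have h4 : s ∉ B := hs.2
          rw [hB, mem_Ioo, not_and_or] at h4
          rcases h4 with h4 | h4
          · push_neg at h4
            exact le_trans (by linarith : δ ≤ t - s) (le_abs_self _)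
          · push_neg at h4
            exact le_trans (by linarith : δ ≤ -(t - s)) (neg_le_abs _)
        have hsq : δ ^ 2 ≤ (t - s) ^ 2 := by
          rw [← _root_.sq_abs (t - s)]
          exact pow_le_pow_left₀ hδpos.le hds 2
        have hK : ε / (ε ^ 2 + (t - s) ^ 2) ≤ ε / δ ^ 2 :=
          div_le_div_of_nonneg_left hεpos.le (by positivity) (by nlinarith [sq_nonneg ε])
        rw [Real.norm_eq_abs, _root_.abs_of_nonneg (mul_nonneg (hw0 s) (by positivity))]
        exact mul_le_mul (hWbd s) hK (by positivity) hWpos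
      calc ∫ s in Icc (-R) R \ B, w s * (ε / (ε ^ 2 + (t - s) ^ 2))
          ≤ ‖∫ s in Icc (-R) R \ B, w s * (ε / (ε ^ 2 + (t - s) ^ 2))‖ := le_abs_self _
        _ ≤ W * (ε / δ ^ 2) * (volume (Icc (-R) R \ B)).toReal :=
            norm_setIntegral_le_of_norm_le_const hfin hb2
        _ ≤ W * (ε / δ ^ 2) * (2 * R) := by
            apply mul_le_mul_of_nonneg_left _ (by positivity)
            have h5 : volume (Icc (-R) R \ B) ≤ ENNReal.ofReal (2 * R) := by
              refine le_trans (measure_mono diff_subset) ?_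
              rw [Real.volume_Icc]
              exact ENNReal.ofReal_le_ofReal (by ring_nf; linarith)
            exact ENNReal.toReal_le_of_le_ofReal (by positivity) h5
    have hsum := add_le_add hp1 hp2
    have htail : Real.pi⁻¹ * (W * (ε / δ ^ 2) * (2 * R)) ≤ η := by
      have e1 : Real.pi⁻¹ * (W * (ε / δ ^ 2) * (2 * R)) = (W * 2 * R * ε) / (Real.pi * δ ^ 2) := by
        field_simp
      rw [e1, div_le_iff₀ (by positivity)]
      nlinarith [hεδ]
    calc Real.pi⁻¹ * ((∫ s in Icc (-R) R ∩ B, w s * (ε / (ε ^ 2 + (t - s) ^ 2)))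
          + ∫ s in Icc (-R) R \ B, w s * (ε / (ε ^ 2 + (t - s) ^ 2)))
        ≤ Real.pi⁻¹ * ((w t + η) * Real.pi + W * (ε / δ ^ 2) * (2 * R)) :=
          mul_le_mul_of_nonneg_left hsum (by positivity)
      _ = (w t + η) + Real.pi⁻¹ * (W * (ε / δ ^ 2) * (2 * R)) := by
          rw [mul_add]
          congr 1
          rw [mul_comm (w t + η) Real.pi, inv_mul_cancel_left₀ (ne_of_gt hπ)]
      _ ≤ w t + 2 * η := by linarith [htail]
  -- differentiability of H
  have hHdiff : DiffContOnCl ℂ H {ζ : ℂ | 0 < ζ.re} := by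
    apply DifferentiableOn.diffContOnCl
    rw [Complex.closure_setOf_lt_re]
    intro ζ hζ
    have hζre : (0:ℝ) ≤ ζ.re := hζ
    apply DifferentiableAt.differentiableWithinAt
    have hmulI : DifferentiableAt ℂ (fun ζ : ℂ => ζ * Complex.I) ζ :=
      differentiableAt_id.mul_const _
    have h1 : DifferentiableAt ℂ (fun ζ : ℂ => g (ζ * Complex.I)) ζ :=
      (hg _).comp ζ hmulI
    have haff : DifferentiableAt ℂ (fun ζ : ℂ => ζ * Complex.I + (ε : ℂ) * Complex.I) ζ :=
      hmulI.add_const _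
    have himpos : 0 < (ζ * Complex.I + (ε : ℂ) * Complex.I).im := by
      rw [hargim]
      have : (ζ * Complex.I).im = ζ.re := by simp
      rw [this]
      linarith
    have hFd : DifferentiableAt ℂ F (ζ * Complex.I + (ε : ℂ) * Complex.I) :=
      F_diffAt hw hsupp himpos
    have h2 : DifferentiableAt ℂ (fun ζ : ℂ => F (ζ * Complex.I + (ε : ℂ) * Complex.I)) ζ :=
      DifferentiableAt.comp (g := F) (f := fun ζ : ℂ => ζ * Complex.I + (ε : ℂ) * Complex.I) ζ hFd haff
    exact h1.mul ((h2.const_mul _).cexp)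
  -- growth hypothesis
  have hexp : ∃ c < (2:ℝ), ∃ B : ℝ, H =O[Bornology.cobounded ℂ ⊓ Filter.principal {ζ : ℂ | 0 < ζ.re}]
      fun ζ => Real.exp (B * ‖ζ‖ ^ c) := by
    refine ⟨1, one_lt_two, 0, ?_⟩
    apply Asymptotics.IsBigO.of_bound (Real.exp W)
    rw [Filter.eventually_inf_principal]
    apply Filter.Eventually.of_forall
    intro ζ hζ
    have : ‖Real.exp (0 * ‖ζ‖ ^ (1:ℝ))‖ = 1 := by simp
    rw [this, mul_one]
    exact hHb ζ (le_of_lt hζ)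
  -- boundedness on the real axis
  have hre : Filter.IsBoundedUnder (· ≤ ·) Filter.atTop fun s : ℝ => ‖H (s : ℂ)‖ := by
    apply Filter.isBoundedUnder_of_eventually_le (a := Real.exp W)
    filter_upwards [Filter.eventually_ge_atTop (0:ℝ)] with s hs
    exact hHb (s : ℂ) (by simpa using hs)
  -- boundary bound on the imaginary axis
  have him : ∀ s : ℝ, ‖H ((s : ℂ) * Complex.I)‖ ≤ Real.exp (2 * η) := by
    intro s
    have harg : ((s : ℂ) * Complex.I) * Complex.I = ((-s : ℝ) : ℂ) := by
      rw [mul_assoc, Complex.I_mul_I]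
      push_cast
      ring
    rw [hHdef]
    simp only []
    rw [harg, hnorm]
    calc ‖g ((-s : ℝ) : ℂ)‖ * Real.exp (Real.pi⁻¹ * (F (((-s : ℝ) : ℂ) + (ε : ℂ) * Complex.I)).im)
        ≤ Real.exp (-w (-s)) * Real.exp (w (-s) + 2 * η) :=
          mul_le_mul (hwle (-s)) (Real.exp_le_exp.2 (hbd (-s))) (Real.exp_pos _).le
            (Real.exp_pos _).le
      _ = Real.exp (2 * η) := by rw [← Real.exp_add]; ring_nf
  -- apply Phragmen-Lindelof
  set ζ₀ : ℂ := (y : ℂ) + ((-x : ℝ) : ℂ) * Complex.I with hζ₀def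
  have hζ₀re : (0:ℝ) ≤ ζ₀.re := by simp [hζ₀def]; linarith
  have hPL : ‖H ζ₀‖ ≤ Real.exp (2 * η) :=
    PhragmenLindelof.right_half_plane_of_bounded_on_real hHdiff hexp hre him hζ₀re
  have hζ₀I : ζ₀ * Complex.I = z₀ := by
    rw [hζ₀def, hz₀]
    push_cast
    rw [add_mul, mul_assoc, Complex.I_mul_I]
    ring
  rw [hHdef] at hPL
  simp only [] at hPL
  rw [hζ₀I, hnorm] at hPL
  have hgpos : 0 < ‖g z₀‖ := norm_pos_iff.2 hgz
  have hlog : Real.log ‖g z₀‖ + Real.pi⁻¹ * (F (z₀ + (ε : ℂ) * Complex.I)).im ≤ 2 * η := by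
    have h7 := Real.log_le_log (by positivity) hPL
    rwa [Real.log_mul (ne_of_gt hgpos) (Real.exp_ne_zero _), Real.log_exp, Real.log_exp] at h7
  -- correction from height y+ε to height y
  have hz₁im : (z₀ + (ε : ℂ) * Complex.I).im = y + ε := by rw [hargim, hz₀im]
  have hz₁re : (z₀ + (ε : ℂ) * Complex.I).re = x := by simp [hz₀]
  have hcorr : (F z₀).im ≤ (F (z₀ + (ε : ℂ) * Complex.I)).im + W * (ε / y ^ 2) * (2 * R) := by
    rw [F_im hw hsupp (by rw [hz₀im]; exact hy), hz₀im, hz₀re,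
      F_im hw hsupp (by rw [hz₁im]; positivity), hz₁im, hz₁re]
    rw [hint_eq _ (fun s hs => by rw [hwzero s hs, zero_mul]),
      hint_eq _ (fun s hs => by rw [hwzero s hs, zero_mul])]
    have hint1 : IntegrableOn (fun s => w s * (y / (y ^ 2 + (x - s) ^ 2))) (Icc (-R) R) :=
      (hker_int y x hy).integrableOn
    have hint2 : IntegrableOn (fun s => w s * ((y + ε) / ((y + ε) ^ 2 + (x - s) ^ 2)))
        (Icc (-R) R) := (hker_int (y + ε) x (by positivity)).integrableOn
    have hdiffb : ∫ s in Icc (-R) R, (w s * (y / (y ^ 2 + (x - s) ^ 2))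
        - w s * ((y + ε) / ((y + ε) ^ 2 + (x - s) ^ 2))) ≤ W * (ε / y ^ 2) * (2 * R) := by
      have hfin : volume (Icc (-R) R) < ⊤ := by
        rw [Real.volume_Icc]; exact ENNReal.ofReal_lt_top
      have hb3 : ∀ s ∈ Icc (-R) R, ‖w s * (y / (y ^ 2 + (x - s) ^ 2))
          - w s * ((y + ε) / ((y + ε) ^ 2 + (x - s) ^ 2))‖ ≤ W * (ε / y ^ 2) := by
        intro s _
        have hkd : |y / (y ^ 2 + (x - s) ^ 2) - (y + ε) / ((y + ε) ^ 2 + (x - s) ^ 2)|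
            ≤ ε / y ^ 2 := by
          set a : ℝ := x - s
          have hd1 : (0:ℝ) < y ^ 2 + a ^ 2 := by positivity
          have hd2 : (0:ℝ) < (y + ε) ^ 2 + a ^ 2 := by positivity
          rw [div_sub_div _ _ hd1.ne' hd2.ne', abs_div,
            _root_.abs_of_pos (mul_pos hd1 hd2),
            div_le_div_iff₀ (mul_pos hd1 hd2) (by positivity : (0:ℝ) < y ^ 2)]
          have hnum : y * ((y + ε) ^ 2 + a ^ 2) - (y ^ 2 + a ^ 2) * (y + ε)
              = ε * (y * (y + ε) - a ^ 2) := by ring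
          rw [hnum, abs_mul, _root_.abs_of_pos hεpos]
          have habs : |y * (y + ε) - a ^ 2| ≤ y * (y + ε) + a ^ 2 := by
            rw [abs_le]
            constructor <;> nlinarith [sq_nonneg a, mul_pos hy (by linarith : (0:ℝ) < y + ε)]
          calc ε * |y * (y + ε) - a ^ 2| * y ^ 2 ≤ ε * (y * (y + ε) + a ^ 2) * y ^ 2 := by
                apply mul_le_mul_of_nonneg_right _ (sq_nonneg y)
                exact mul_le_mul_of_nonneg_left habs hεpos.le
            _ = ε * ((y * (y + ε) + a ^ 2) * y ^ 2) := by ring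
            _ ≤ ε * ((y ^ 2 + a ^ 2) * ((y + ε) ^ 2 + a ^ 2)) := by
                apply mul_le_mul_of_nonneg_left _ hεpos.le
                nlinarith [mul_nonneg (mul_nonneg (sq_nonneg y)
                    (by linarith : (0:ℝ) ≤ y + ε)) hεpos.le,
                  mul_nonneg (sq_nonneg a) (sq_nonneg (y + ε)), sq_nonneg (a ^ 2)]
        calc ‖w s * (y / (y ^ 2 + (x - s) ^ 2)) - w s * ((y + ε) / ((y + ε) ^ 2 + (x - s) ^ 2))‖
            = w s * |y / (y ^ 2 + (x - s) ^ 2) - (y + ε) / ((y + ε) ^ 2 + (x - s) ^ 2)| := by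
              rw [← mul_sub, Real.norm_eq_abs, abs_mul, _root_.abs_of_nonneg (hw0 s)]
          _ ≤ W * (ε / y ^ 2) := mul_le_mul (hWbd s) hkd (abs_nonneg _) hWpos
      calc ∫ s in Icc (-R) R, (w s * (y / (y ^ 2 + (x - s) ^ 2))
            - w s * ((y + ε) / ((y + ε) ^ 2 + (x - s) ^ 2)))
          ≤ ‖∫ s in Icc (-R) R, (w s * (y / (y ^ 2 + (x - s) ^ 2))
            - w s * ((y + ε) / ((y + ε) ^ 2 + (x - s) ^ 2)))‖ := le_abs_self _
        _ ≤ W * (ε / y ^ 2) * (volume (Icc (-R) R)).toReal :=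
            norm_setIntegral_le_of_norm_le_const hfin hb3
        _ ≤ W * (ε / y ^ 2) * (2 * R) := by
            apply mul_le_mul_of_nonneg_left _ (by positivity)
            rw [Real.volume_Icc]
            exact ENNReal.toReal_le_of_le_ofReal (by positivity)
              (ENNReal.ofReal_le_ofReal (by ring_nf; linarith))
    have := integral_sub hint1 hint2
    linarith [hdiffb, this ▸ hdiffb]
  have htail2 : Real.pi⁻¹ * (W * (ε / y ^ 2) * (2 * R)) ≤ η := by
    have e1 : Real.pi⁻¹ * (W * (ε / y ^ 2) * (2 * R)) = (W * 2 * R * ε) / (Real.pi * y ^ 2) := by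
      field_simp
    rw [e1, div_le_iff₀ (by positivity)]
    nlinarith [hεy]
  have hfinal : Real.pi⁻¹ * (F z₀).im
      ≤ Real.pi⁻¹ * (F (z₀ + (ε : ℂ) * Complex.I)).im + η := by
    have := mul_le_mul_of_nonneg_left hcorr (by positivity : (0:ℝ) ≤ Real.pi⁻¹)
    rw [mul_add] at this
    linarith [htail2]
  linarith [hlog, hfinal]


end AuxPoisson

/-- **Poisson integral majorization on the upper half plane.**
If `g` is entire with `|g| ≤ 1` on the closed upper half plane, then for `x ∈ ℝ`,
`y > 0` we have `log|g(x+iy)| ≤ (1/π) ∫_ℝ y log|g(t)| / (y² + (x−t)²) dt`, both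
sides lying in `[-∞, 0]`.  This is expressed equivalently, after negating both
sides, as an inequality in `[0, ∞]`. -/
theorem poisson_majorization_stmt11
    (g : ℂ → ℂ) (hg : Differentiable ℂ g)
    (hb : ∀ z : ℂ, 0 ≤ z.im → ‖g z‖ ≤ 1) :
    ∀ x y : ℝ, 0 < y →
      (∫⁻ t : ℝ, ENNReal.ofReal (y / (y ^ 2 + (x - t) ^ 2)) * negLog ‖g t‖)
          / ENNReal.ofReal Real.pi
        ≤ negLog ‖g ((x : ℂ) + (y : ℂ) * Complex.I)‖ := by
  intro x y hy
  have hπ := Real.pi_pos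
  set z₀ : ℂ := (x : ℂ) + (y : ℂ) * Complex.I with hz₀
  by_cases hgz : g z₀ = 0
  · have h0 : ‖g z₀‖ = 0 := by rw [hgz, norm_zero]
    rw [negLog, if_pos h0]
    exact le_top
  · have hnz : ‖g z₀‖ ≠ 0 := fun h => hgz (norm_eq_zero.mp h)
    set r : ℝ → ℝ := fun t : ℝ => ‖g (t : ℂ)‖ with hrdef
    have hr : Continuous r := (hg.continuous.comp Complex.continuous_ofReal).norm
    have hr0 : ∀ t, 0 ≤ r t := fun t => norm_nonneg _
    have hr1 : ∀ t, r t ≤ 1 := fun t => hb _ (by simp)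
    have hgz₀le : ‖g z₀‖ ≤ 1 := hb _ (by rw [hz₀]; simp; exact hy.le)
    have hloggz : 0 ≤ -Real.log ‖g z₀‖ := by
      rw [neg_nonneg]
      exact Real.log_nonpos (norm_nonneg _) hgz₀le
    -- rewrite the lintegral using the approximating sequence
    have hstep1 : (∫⁻ t : ℝ, ENNReal.ofReal (y / (y ^ 2 + (x - t) ^ 2)) * negLog ‖g t‖)
        = ⨆ n, ∫⁻ t : ℝ, ENNReal.ofReal (y / (y ^ 2 + (x - t) ^ 2))
            * ENNReal.ofReal (wcut r n t) := by
      rw [← lintegral_iSup]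
      · apply lintegral_congr
        intro t
        rw [← ENNReal.mul_iSup, wcut_sup hr0 hr1 t]
      · intro n
        refine Measurable.mul (f := fun t => ENNReal.ofReal (y / (y ^ 2 + (x - t) ^ 2)))
          (g := fun t => ENNReal.ofReal (wcut r n t)) ?_ ?_
        · exact (kernel_cont hy x).measurable.ennreal_ofReal
        · exact (wcut_cont hr n).measurable.ennreal_ofReal
      · intro n m hnm
        intro t
        exact mul_le_mul_right (ENNReal.ofReal_le_ofReal (wcut_mono hr1 t hnm)) _
    have hstep2 : ∀ n : ℕ, (∫⁻ t : ℝ, ENNReal.ofReal (y / (y ^ 2 + (x - t) ^ 2))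
        * ENNReal.ofReal (wcut r n t))
        = ENNReal.ofReal (∫ t : ℝ, wcut r n t * (y / (y ^ 2 + (x - t) ^ 2))) := by
      intro n
      have hint : Integrable (fun t : ℝ => wcut r n t * (y / (y ^ 2 + (x - t) ^ 2))) :=
        ((wcut_cont hr n).mul (kernel_cont hy x)).integrable_of_hasCompactSupport
          ((wcut_supp n).mul_right)
      rw [ofReal_integral_eq_lintegral_ofReal hint
        (Filter.Eventually.of_forall fun t =>
          mul_nonneg (wcut_nonneg hr1 n t) (by positivity))]
      apply lintegral_congr
      intro t
      rw [ENNReal.ofReal_mul (wcut_nonneg hr1 n t), mul_comm]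
    have hstep3 : ∀ n : ℕ, (∫ t : ℝ, wcut r n t * (y / (y ^ 2 + (x - t) ^ 2)))
        ≤ Real.pi * (-Real.log ‖g z₀‖) := by
      intro n
      have hc := core g hg hb x y hy hgz (wcut r n) (wcut_cont hr n) (wcut_supp n)
        (wcut_nonneg hr1 n) (wcut_le hr1 n)
      have h2 : Real.pi⁻¹ * (∫ t : ℝ, wcut r n t * (y / (y ^ 2 + (x - t) ^ 2)))
          ≤ -Real.log ‖g z₀‖ := by rw [← hz₀] at hc; linarith
      calc (∫ t : ℝ, wcut r n t * (y / (y ^ 2 + (x - t) ^ 2)))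
          = Real.pi * (Real.pi⁻¹ * ∫ t : ℝ, wcut r n t * (y / (y ^ 2 + (x - t) ^ 2))) := by
            rw [← mul_assoc, mul_inv_cancel₀ (ne_of_gt hπ), one_mul]
        _ ≤ Real.pi * (-Real.log ‖g z₀‖) := mul_le_mul_of_nonneg_left h2 hπ.le
    rw [negLog, if_neg hnz]
    rw [ENNReal.div_le_iff_le_mul
      (Or.inl (by simp [ENNReal.ofReal_eq_zero]; exact hπ))
      (Or.inl ENNReal.ofReal_ne_top)]
    rw [hstep1]
    apply iSup_le
    intro n
    rw [hstep2 n, ← ENNReal.ofReal_mul hloggz]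
    apply ENNReal.ofReal_le_ofReal
    calc (∫ t : ℝ, wcut r n t * (y / (y ^ 2 + (x - t) ^ 2)))
        ≤ Real.pi * (-Real.log ‖g z₀‖) := hstep3 n
      _ = -Real.log ‖g z₀‖ * Real.pi := mul_comm _ _
end

section
/- Let ψ : [0,∞) → [0,∞) be locally integrable. Then for every s ≥ 0, the inequality ∫_ℝ ψ(√(s² + x²)) / (1 + x²) dx ≥ 2 ∫_s^∞ ψ(r)/(1 + r²) dr holds (both sides possibly equal to +∞). In particular, if ∫₀^∞ ψ(r)/(1+r²) dr = ∞ then ∫_ℝ ψ(√(s² + x²))/(1+x²) dx = ∞ for every s ≥ 0. -/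
open MeasureTheory

theorem my_lintegral_cov {s : Set ℝ} {f : ℝ → ℝ} {f' : ℝ → ℝ}
    (hs : MeasurableSet s) (hf' : ∀ x ∈ s, HasDerivWithinAt f (f' x) s x)
    (hf : Set.InjOn f s) (g : ℝ → ENNReal) :
    ∫⁻ x in f '' s, g x = ∫⁻ x in s, ENNReal.ofReal |f' x| * g (f x) := by
  simpa only [ContinuousLinearMap.det_toSpanSingleton] using
    lintegral_image_eq_lintegral_abs_det_fderiv_mul volume hs
      (fun x hx => (hf' x hx).hasFDerivWithinAt) hf g

theorem my_aux (ψ : ℝ → ℝ) (hψ0 : ∀ r ≥ (0 : ℝ), 0 ≤ ψ r)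
    (s : ℝ) (hs : 0 ≤ s) (ε : ℝ) (hε : ε = 1 ∨ ε = -1) :
    ∫⁻ r in Set.Ioi s, ENNReal.ofReal (ψ r / (1 + r ^ 2))
      ≤ ∫⁻ x in (fun r => ε * Real.sqrt (r ^ 2 - s ^ 2)) '' Set.Ioi s,
          ENNReal.ofReal (ψ (Real.sqrt (s ^ 2 + x ^ 2)) / (1 + x ^ 2)) := by
  have hεabs : |ε| = 1 := by rcases hε with h | h <;> simp [h]
  have hεsq : ε ^ 2 = 1 := by rcases hε with h | h <;> simp [h]
  have hεne : ε ≠ 0 := by rcases hε with h | h <;> simp [h]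
  set g : ℝ → ℝ := fun r => ε * Real.sqrt (r ^ 2 - s ^ 2) with hg
  -- basic facts for r ∈ Ioi s
  have hsub : ∀ r ∈ Set.Ioi s, 0 < r ^ 2 - s ^ 2 := by
    intro r hr
    have hr' : s < r := hr
    nlinarith
  have hrpos : ∀ r ∈ Set.Ioi s, 0 < r := fun r hr => lt_of_le_of_lt hs hr
  -- derivative
  have hderiv : ∀ r ∈ Set.Ioi s,
      HasDerivWithinAt g (ε * r / Real.sqrt (r ^ 2 - s ^ 2)) (Set.Ioi s) r := by
    intro r hr
    have h1 : HasDerivAt (fun r : ℝ => r ^ 2 - s ^ 2) (2 * r) r := by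
      simpa using (hasDerivAt_pow 2 r).sub_const (s ^ 2)
    have h2 := (Real.hasDerivAt_sqrt (ne_of_gt (hsub r hr))).comp r h1
    have h3 := h2.const_mul ε
    have hne : Real.sqrt (r ^ 2 - s ^ 2) ≠ 0 :=
      ne_of_gt (Real.sqrt_pos.mpr (hsub r hr))
    have : ε * (1 / (2 * Real.sqrt (r ^ 2 - s ^ 2)) * (2 * r))
        = ε * r / Real.sqrt (r ^ 2 - s ^ 2) := by field_simp
    rw [this] at h3
    exact h3.hasDerivWithinAt
  -- injectivity
  have hinj : Set.InjOn g (Set.Ioi s) := by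
    intro a ha b hb h
    have h' : Real.sqrt (a ^ 2 - s ^ 2) = Real.sqrt (b ^ 2 - s ^ 2) :=
      mul_left_cancel₀ hεne h
    have h2 : a ^ 2 - s ^ 2 = b ^ 2 - s ^ 2 := by
      rwa [Real.sqrt_inj (hsub a ha).le (hsub b hb).le] at h'
    have h3 : a ^ 2 = b ^ 2 := by linarith
    calc a = Real.sqrt (a ^ 2) := (Real.sqrt_sq (hrpos a ha).le).symm
      _ = Real.sqrt (b ^ 2) := by rw [h3]
      _ = b := Real.sqrt_sq (hrpos b hb).le
  rw [my_lintegral_cov measurableSet_Ioi hderiv hinj]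
  refine setLIntegral_mono' measurableSet_Ioi ?_
  intro r hr
  have hru : 0 < r ^ 2 - s ^ 2 := hsub r hr
  set t := Real.sqrt (r ^ 2 - s ^ 2) with ht
  have htpos : 0 < t := Real.sqrt_pos.mpr hru
  have htsq : t ^ 2 = r ^ 2 - s ^ 2 := Real.sq_sqrt hru.le
  have htr : t ≤ r := by
    rw [ht]
    calc Real.sqrt (r ^ 2 - s ^ 2) ≤ Real.sqrt (r ^ 2) :=
        Real.sqrt_le_sqrt (by nlinarith)
      _ = r := Real.sqrt_sq (hrpos r hr).le
  have hgr : g r = ε * t := rfl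
  have hgrsq : (g r) ^ 2 = r ^ 2 - s ^ 2 := by
    rw [hgr, mul_pow, hεsq, one_mul, htsq]
  have hroot : Real.sqrt (s ^ 2 + (g r) ^ 2) = r := by
    rw [hgrsq]
    have : s ^ 2 + (r ^ 2 - s ^ 2) = r ^ 2 := by ring
    rw [this, Real.sqrt_sq (hrpos r hr).le]
  have habs : |ε * r / t| = r / t := by
    rw [abs_div, abs_mul, hεabs, one_mul, abs_of_pos (hrpos r hr), abs_of_pos htpos]
  rw [hroot, habs]
  have hψr : 0 ≤ ψ r := hψ0 r (hrpos r hr).le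
  rw [← ENNReal.ofReal_mul (div_nonneg (hrpos r hr).le htpos.le)]
  apply ENNReal.ofReal_le_ofReal
  have h1 : ψ r / (1 + r ^ 2) ≤ ψ r / (1 + (g r) ^ 2) := by
    rw [hgrsq]
    gcongr <;> nlinarith
  have h2 : (1 : ℝ) ≤ r / t := (one_le_div htpos).mpr htr
  calc ψ r / (1 + r ^ 2) ≤ ψ r / (1 + (g r) ^ 2) := h1
    _ ≤ r / t * (ψ r / (1 + (g r) ^ 2)) := le_mul_of_one_le_left (by positivity) h2

theorem my_img_pos (s : ℝ) (hs : 0 ≤ s) :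
    (fun r => (1 : ℝ) * Real.sqrt (r ^ 2 - s ^ 2)) '' Set.Ioi s = Set.Ioi 0 := by
  ext y
  simp only [Set.mem_image, Set.mem_Ioi, one_mul]
  constructor
  · rintro ⟨r, hr, rfl⟩
    exact Real.sqrt_pos.mpr (by nlinarith [lt_of_le_of_lt hs hr])
  · intro hy
    refine ⟨Real.sqrt (s ^ 2 + y ^ 2), ?_, ?_⟩
    · calc s = Real.sqrt (s ^ 2) := (Real.sqrt_sq hs).symm
        _ < Real.sqrt (s ^ 2 + y ^ 2) := by
          apply Real.sqrt_lt_sqrt (sq_nonneg s); nlinarith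
    · rw [Real.sq_sqrt (by positivity)]
      have : s ^ 2 + y ^ 2 - s ^ 2 = y ^ 2 := by ring
      rw [this, Real.sqrt_sq hy.le]

theorem my_img_neg (s : ℝ) (hs : 0 ≤ s) :
    (fun r => (-1 : ℝ) * Real.sqrt (r ^ 2 - s ^ 2)) '' Set.Ioi s = Set.Iio 0 := by
  have : (fun r => (-1 : ℝ) * Real.sqrt (r ^ 2 - s ^ 2))
      = (fun y : ℝ => -y) ∘ (fun r => (1 : ℝ) * Real.sqrt (r ^ 2 - s ^ 2)) := by
    funext r; simp
  rw [this, Set.image_comp, my_img_pos s hs]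
  ext y; simp only [Set.mem_image, Set.mem_Ioi, Set.mem_Iio]
  constructor
  · rintro ⟨x, hx, rfl⟩; linarith
  · intro hy; exact ⟨-y, by linarith, by ring⟩

/-- For a locally integrable `ψ : [0,∞) → [0,∞)` and every `s ≥ 0`,
`∫_ℝ ψ(√(s²+x²))/(1+x²) dx ≥ 2 ∫_s^∞ ψ(r)/(1+r²) dr` (values in `[0,∞]`);
in particular, if `∫₀^∞ ψ(r)/(1+r²) dr = ∞` then the left-hand side is `∞`
for every `s ≥ 0`. -/
theorem slice_integral_lower_bound_stmt13
    (ψ : ℝ → ℝ)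
    (hψ0 : ∀ r ≥ (0 : ℝ), 0 ≤ ψ r)
    (hψloc : LocallyIntegrableOn ψ (Set.Ici 0)) :
    (∀ s ≥ (0 : ℝ),
      2 * ∫⁻ r in Set.Ici s, ENNReal.ofReal (ψ r / (1 + r ^ 2))
        ≤ ∫⁻ x : ℝ, ENNReal.ofReal (ψ (Real.sqrt (s ^ 2 + x ^ 2)) / (1 + x ^ 2))) ∧
    ((∫⁻ r in Set.Ici (0 : ℝ), ENNReal.ofReal (ψ r / (1 + r ^ 2))) = ⊤ →
      ∀ s ≥ (0 : ℝ),
        ∫⁻ x : ℝ, ENNReal.ofReal (ψ (Real.sqrt (s ^ 2 + x ^ 2)) / (1 + x ^ 2)) = ⊤) := by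
  have key : ∀ s ≥ (0 : ℝ),
      2 * ∫⁻ r in Set.Ici s, ENNReal.ofReal (ψ r / (1 + r ^ 2))
        ≤ ∫⁻ x : ℝ, ENNReal.ofReal (ψ (Real.sqrt (s ^ 2 + x ^ 2)) / (1 + x ^ 2)) := by
    intro s hs
    set F : ℝ → ENNReal :=
      fun x => ENNReal.ofReal (ψ (Real.sqrt (s ^ 2 + x ^ 2)) / (1 + x ^ 2)) with hF
    have hIci : ∫⁻ r in Set.Ici s, ENNReal.ofReal (ψ r / (1 + r ^ 2))
        = ∫⁻ r in Set.Ioi s, ENNReal.ofReal (ψ r / (1 + r ^ 2)) := by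
      rw [Measure.restrict_congr_set Ioi_ae_eq_Ici]
    have hpos := (my_aux ψ hψ0 s hs 1 (Or.inl rfl)).trans_eq
      (by rw [my_img_pos s hs])
    have hneg := (my_aux ψ hψ0 s hs (-1) (Or.inr rfl)).trans_eq
      (by rw [my_img_neg s hs])
    calc 2 * ∫⁻ r in Set.Ici s, ENNReal.ofReal (ψ r / (1 + r ^ 2))
        = (∫⁻ r in Set.Ioi s, ENNReal.ofReal (ψ r / (1 + r ^ 2)))
          + ∫⁻ r in Set.Ioi s, ENNReal.ofReal (ψ r / (1 + r ^ 2)) := by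
          rw [hIci, two_mul]
      _ ≤ (∫⁻ x in Set.Iio (0:ℝ), F x) + ∫⁻ x in Set.Ioi (0:ℝ), F x := add_le_add hneg hpos
      _ = ∫⁻ x in Set.Iio (0:ℝ) ∪ Set.Ioi (0:ℝ), F x :=
          (lintegral_union measurableSet_Ioi ((Set.Iio_disjoint_Ici (le_refl (0:ℝ))).mono_right Set.Ioi_subset_Ici_self)).symm
      _ ≤ ∫⁻ x, F x := setLIntegral_le_lintegral _ _
  refine ⟨key, ?_⟩
  intro htop s hs
  have hint : IntegrableOn ψ (Set.Icc 0 s) :=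
    hψloc.integrableOn_compact_subset Set.Icc_subset_Ici_self isCompact_Icc
  have hfin : ∫⁻ r in Set.Icc (0:ℝ) s, ENNReal.ofReal (ψ r / (1 + r ^ 2)) ≠ ⊤ := by
    have hle : ∫⁻ r in Set.Icc (0:ℝ) s, ENNReal.ofReal (ψ r / (1 + r ^ 2))
        ≤ ∫⁻ r in Set.Icc (0:ℝ) s, (‖ψ r‖₊ : ENNReal) := by
      apply lintegral_mono
      intro r
      show ENNReal.ofReal (ψ r / (1 + r ^ 2)) ≤ (‖ψ r‖₊ : ENNReal)
      rw [← enorm_eq_nnnorm, Real.enorm_eq_ofReal_abs]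
      apply ENNReal.ofReal_le_ofReal
      rcases le_or_gt 0 (ψ r) with h | h
      · have h1 : ψ r / (1 + r ^ 2) ≤ ψ r := by
          rw [div_le_iff₀ (by nlinarith : (0:ℝ) < 1 + r ^ 2)]
          nlinarith
        exact h1.trans (le_abs_self _)
      · have h1 : ψ r / (1 + r ^ 2) ≤ 0 :=
          div_nonpos_of_nonpos_of_nonneg h.le (by nlinarith)
        exact h1.trans (abs_nonneg _)
    exact ne_top_of_le_ne_top hint.2.ne hle
  have hsplit : (∫⁻ r in Set.Icc (0:ℝ) s, ENNReal.ofReal (ψ r / (1 + r ^ 2)))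
      + ∫⁻ r in Set.Ioi s, ENNReal.ofReal (ψ r / (1 + r ^ 2)) = ⊤ := by
    rw [← lintegral_union measurableSet_Ioi ((Set.Iic_disjoint_Ioi le_rfl).mono_left Set.Icc_subset_Iic_self),
      Set.Icc_union_Ioi_eq_Ici hs]
    exact htop
  have hIoi : ∫⁻ r in Set.Ioi s, ENNReal.ofReal (ψ r / (1 + r ^ 2)) = ⊤ := by
    by_contra h
    exact (ENNReal.add_ne_top.mpr ⟨hfin, h⟩) hsplit
  have hIci : ∫⁻ r in Set.Ici s, ENNReal.ofReal (ψ r / (1 + r ^ 2)) = ⊤ :=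
    top_le_iff.mp (hIoi ▸ lintegral_mono_set Set.Ioi_subset_Ici_self)
  have := key s hs
  rw [hIci, ENNReal.mul_top (by norm_num)] at this
  exact top_le_iff.mp this
end
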